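/- arXiv:1212.5484 — 9 statements merged into one kernel-verified Lean document; each statement's English description precedes it below -/
import Mathlib

section
/- For any nonzero vectors v1, v2, v3 in a real inner product space, sin θ(v1,v3) ≤ sin θ(v1,v2) + sin θ(v2,v3), where sin θ(u,w) = ‖u ∧ w‖/(‖u‖·‖w‖) is equivalently defined as ‖π_{w⊥}(u)‖/‖u‖, the norm of the orthogonal projection of u/‖u‖ onto the orthogonal complement of w. -/
open RealInnerProductSpace

/-- The sine of the angle between two nonzero vectors `u` and `w`:
`sin θ(u,w) = ‖u - (⟪u,w⟫/‖w‖²) w‖ / ‖u‖`. -/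
noncomputable def sinAngleVec {V : Type*} [NormedAddCommGroup V]
    [InnerProductSpace ℝ V] (u w : V) : ℝ :=
  ‖u - (⟪u, w⟫ / ‖w‖ ^ 2) • w‖ / ‖u‖

section Aux
variable {V : Type*} [NormedAddCommGroup V] [InnerProductSpace ℝ V]

lemma proj_min (a c : V) (hc : ‖c‖ = 1) (t : ℝ) :
    ‖a - ⟪a, c⟫ • c‖ ≤ ‖a - t • c‖ := by
  have horth : ⟪a - ⟪a,c⟫ • c, (⟪a,c⟫ - t) • c⟫ = 0 := by
    rw [real_inner_smul_right, inner_sub_left, real_inner_smul_left,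
      real_inner_self_eq_norm_sq, hc]
    ring
  have hdecomp : a - t • c = (a - ⟪a,c⟫ • c) + (⟪a,c⟫ - t) • c := by
    rw [sub_smul]; abel
  rw [hdecomp]
  have h := norm_add_sq_real (a - ⟪a,c⟫ • c) ((⟪a,c⟫ - t) • c)
  nlinarith [norm_nonneg ((⟪a,c⟫ - t) • c), norm_nonneg (a - ⟪a,c⟫ • c),
    norm_nonneg ((a - ⟪a,c⟫ • c) + (⟪a,c⟫ - t) • c)]

lemma unit_sq (a c : V) (ha : ‖a‖ = 1) (hc : ‖c‖ = 1) :
    ‖a - ⟪a, c⟫ • c‖ ^ 2 = 1 - ⟪a,c⟫ ^ 2 := by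
  rw [← real_inner_self_eq_norm_sq]
  rw [inner_sub_sub_self, real_inner_smul_right, real_inner_smul_left,
    real_inner_smul_left, real_inner_smul_right, real_inner_self_eq_norm_sq,
    real_inner_self_eq_norm_sq, ha, hc, real_inner_comm a c]
  ring

lemma unit_symm (a c : V) (ha : ‖a‖ = 1) (hc : ‖c‖ = 1) :
    ‖a - ⟪a, c⟫ • c‖ = ‖c - ⟪c, a⟫ • a‖ := by
  have := unit_sq a c ha hc
  have h2 := unit_sq c a hc ha
  have h3 : ‖a - ⟪a, c⟫ • c‖ ^ 2 = ‖c - ⟪c, a⟫ • a‖ ^ 2 := by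
    rw [this, h2, real_inner_comm]
  exact (sq_eq_sq₀ (norm_nonneg _) (norm_nonneg _)).mp h3

lemma unit_triangle (a b c : V) (ha : ‖a‖ = 1) (hb : ‖b‖ = 1) (hc : ‖c‖ = 1) :
    ‖a - ⟪a, c⟫ • c‖ ≤ ‖a - ⟪a, b⟫ • b‖ + ‖b - ⟪b, c⟫ • c‖ := by
  have hab : |⟪a, b⟫| ≤ 1 := by
    have := abs_real_inner_le_norm a b; rwa [ha, hb, one_mul] at this
  calc ‖a - ⟪a, c⟫ • c‖ ≤ ‖a - (⟪a,b⟫ * ⟪b,c⟫) • c‖ := proj_min a c hc _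
    _ = ‖(a - ⟪a,b⟫ • b) + ⟪a,b⟫ • (b - ⟪b,c⟫ • c)‖ := by
        congr 1
        rw [smul_sub, smul_smul]
        abel
    _ ≤ ‖a - ⟪a,b⟫ • b‖ + ‖⟪a,b⟫ • (b - ⟪b,c⟫ • c)‖ := norm_add_le _ _
    _ ≤ ‖a - ⟪a,b⟫ • b‖ + ‖b - ⟪b,c⟫ • c‖ := by
        rw [norm_smul, Real.norm_eq_abs]
        nlinarith [norm_nonneg (b - ⟪b,c⟫ • c)]

lemma sinAngleVec_eq_unit (u w : V) (hu : u ≠ 0) (hw : w ≠ 0) :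
    sinAngleVec u w
      = ‖(‖u‖⁻¹ • u) - ⟪‖u‖⁻¹ • u, ‖w‖⁻¹ • w⟫ • (‖w‖⁻¹ • w)‖ := by
  have hu' : ‖u‖ ≠ 0 := norm_ne_zero_iff.mpr hu
  have hw' : ‖w‖ ≠ 0 := norm_ne_zero_iff.mpr hw
  have : (‖u‖⁻¹ • u) - ⟪‖u‖⁻¹ • u, ‖w‖⁻¹ • w⟫ • (‖w‖⁻¹ • w)
      = ‖u‖⁻¹ • (u - (⟪u, w⟫ / ‖w‖ ^ 2) • w) := by
    rw [real_inner_smul_left, real_inner_smul_right, smul_sub, smul_smul,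
      smul_smul]
    have hco : ‖u‖⁻¹ * (‖w‖⁻¹ * ⟪u,w⟫) * ‖w‖⁻¹ = ‖u‖⁻¹ * (⟪u, w⟫ / ‖w‖ ^ 2) := by
      rw [pow_two, div_eq_mul_inv, mul_inv]; ring
    rw [hco]
  rw [this, norm_smul, Real.norm_eq_abs, abs_inv, abs_norm, sinAngleVec,
    inv_mul_eq_div]

end Aux

/-- Triangle inequality for the sine of the angle between nonzero vectors. -/
theorem sinAngleVec_triangle {V : Type*} [NormedAddCommGroup V]
    [InnerProductSpace ℝ V] [FiniteDimensional ℝ V]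
    (v₁ v₂ v₃ : V) (h₁ : v₁ ≠ 0) (h₂ : v₂ ≠ 0) (h₃ : v₃ ≠ 0) :
    sinAngleVec v₁ v₃ ≤ sinAngleVec v₁ v₂ + sinAngleVec v₂ v₃ := by
  have n₁ : ‖(‖v₁‖⁻¹ • v₁ : V)‖ = 1 := norm_smul_inv_norm h₁
  have n₂ : ‖(‖v₂‖⁻¹ • v₂ : V)‖ = 1 := norm_smul_inv_norm h₂
  have n₃ : ‖(‖v₃‖⁻¹ • v₃ : V)‖ = 1 := norm_smul_inv_norm h₃
  rw [sinAngleVec_eq_unit v₁ v₃ h₁ h₃, sinAngleVec_eq_unit v₁ v₂ h₁ h₂,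
    sinAngleVec_eq_unit v₂ v₃ h₂ h₃]
  exact unit_triangle _ _ _ n₁ n₂ n₃
end

section
/- Let S1, S2, T be linear subspaces of a finite-dimensional real inner product space V with S1 orthogonal to S2. Then sin θ(S1 + S2, T) ≤ sin θ(S1, T) + sin θ(S2, T), where for subspaces sin θ(S,T) = sup over nonzero s ∈ S of ‖π_{T⊥}(s)‖/‖s‖ and π_{T⊥} is orthogonal projection onto the orthogonal complement of T. -/
open RealInnerProductSpace

variable {V : Type*} [NormedAddCommGroup V] [InnerProductSpace ℝ V]
  [FiniteDimensional ℝ V]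

/-- The sine of the angle between a vector `s` and a subspace `T`:
`sin θ(s,T) = ‖π_{T⊥}(s)‖ / ‖s‖`, the norm of the orthogonal projection of
`s/‖s‖` onto the orthogonal complement of `T`. -/
noncomputable def sinAngleVecSub (s : V) (T : Submodule ℝ V) : ℝ :=
  ‖(Tᗮ.orthogonalProjectionOnto s : V)‖ / ‖s‖

/-- The sine of the angle between subspaces `S` and `T`:
`sin θ(S,T) = sup { sin θ(s,T) : s ∈ S, s ≠ 0 }` (with value `0` for `S = {0}`). -/
noncomputable def sinAngleSub (S T : Submodule ℝ V) : ℝ :=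
  sSup ((fun s => sinAngleVecSub s T) '' {s : V | s ∈ S ∧ s ≠ 0})

lemma norm_proj_le (T : Submodule ℝ V) (s : V) :
    ‖(Tᗮ.orthogonalProjectionOnto s : V)‖ ≤ ‖s‖ := by
  calc ‖(Tᗮ.orthogonalProjectionOnto s : V)‖ = ‖Tᗮ.orthogonalProjectionOnto s‖ := rfl
    _ ≤ ‖Tᗮ.orthogonalProjectionOnto‖ * ‖s‖ := (Tᗮ.orthogonalProjectionOnto).le_opNorm s
    _ ≤ 1 * ‖s‖ :=
        mul_le_mul_of_nonneg_right (Submodule.orthogonalProjectionOnto_norm_le _) (norm_nonneg s)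
    _ = ‖s‖ := one_mul _

lemma sinAngleVecSub_le_one (s : V) (T : Submodule ℝ V) : sinAngleVecSub s T ≤ 1 := by
  unfold sinAngleVecSub
  rcases eq_or_ne s 0 with rfl | hs
  · simp
  · rw [div_le_one (norm_pos_iff.mpr hs)]
    exact norm_proj_le T s

lemma sinAngleSub_bddAbove (S T : Submodule ℝ V) :
    BddAbove ((fun s => sinAngleVecSub s T) '' {s : V | s ∈ S ∧ s ≠ 0}) := by
  refine ⟨1, ?_⟩
  rintro x ⟨s, _, rfl⟩
  exact sinAngleVecSub_le_one s T

lemma sinAngleSub_nonneg (S T : Submodule ℝ V) : 0 ≤ sinAngleSub S T := by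
  apply Real.sSup_nonneg
  rintro x ⟨s, _, rfl⟩
  exact div_nonneg (norm_nonneg _) (norm_nonneg _)

lemma norm_proj_le_sin (S T : Submodule ℝ V) (s : V) (hs : s ∈ S) :
    ‖(Tᗮ.orthogonalProjectionOnto s : V)‖ ≤ sinAngleSub S T * ‖s‖ := by
  rcases eq_or_ne s 0 with rfl | hne
  · simp
  · have h : sinAngleVecSub s T ≤ sinAngleSub S T :=
      le_csSup (sinAngleSub_bddAbove S T) ⟨s, ⟨hs, hne⟩, rfl⟩
    have hpos : (0 : ℝ) < ‖s‖ := norm_pos_iff.mpr hne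
    rw [sinAngleVecSub, div_le_iff₀ hpos] at h
    exact h

/-- If `S₁` is orthogonal to `S₂` then
`sin θ(S₁ + S₂, T) ≤ sin θ(S₁, T) + sin θ(S₂, T)`. -/
theorem sinAngleSub_sup_le (S₁ S₂ T : Submodule ℝ V)
    (horth : ∀ s₁ ∈ S₁, ∀ s₂ ∈ S₂, ⟪s₁, s₂⟫ = 0) :
    sinAngleSub (S₁ ⊔ S₂) T ≤ sinAngleSub S₁ T + sinAngleSub S₂ T := by
  apply Real.sSup_le
  · rintro x ⟨s, ⟨hsmem, hsne⟩, rfl⟩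
    obtain ⟨s₁, h₁, s₂, h₂, rfl⟩ := Submodule.mem_sup.mp hsmem
    have hpos : (0 : ℝ) < ‖s₁ + s₂‖ := norm_pos_iff.mpr hsne
    -- norms of components are bounded by the norm of the sum
    have hsq : ‖s₁ + s₂‖ ^ 2 = ‖s₁‖ ^ 2 + ‖s₂‖ ^ 2 := by
      rw [norm_add_sq_real, horth s₁ h₁ s₂ h₂]; ring
    have h1 : ‖s₁‖ ≤ ‖s₁ + s₂‖ := by
      nlinarith [norm_nonneg s₁, norm_nonneg (s₁ + s₂), sq_nonneg ‖s₂‖]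
    have h2 : ‖s₂‖ ≤ ‖s₁ + s₂‖ := by
      nlinarith [norm_nonneg s₂, norm_nonneg (s₁ + s₂), sq_nonneg ‖s₁‖]
    have hb1 := norm_proj_le_sin S₁ T s₁ h₁
    have hb2 := norm_proj_le_sin S₂ T s₂ h₂
    have hproj : ‖(Tᗮ.orthogonalProjectionOnto (s₁ + s₂) : V)‖
        ≤ ‖(Tᗮ.orthogonalProjectionOnto s₁ : V)‖ + ‖(Tᗮ.orthogonalProjectionOnto s₂ : V)‖ := by
      rw [map_add]
      exact norm_add_le _ _
    have hA := sinAngleSub_nonneg S₁ T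
    have hB := sinAngleSub_nonneg S₂ T
    show ‖(Tᗮ.orthogonalProjectionOnto (s₁ + s₂) : V)‖ / ‖s₁ + s₂‖ ≤ _
    rw [div_le_iff₀ hpos]
    calc ‖(Tᗮ.orthogonalProjectionOnto (s₁ + s₂) : V)‖
        ≤ sinAngleSub S₁ T * ‖s₁‖ + sinAngleSub S₂ T * ‖s₂‖ := by
          exact hproj.trans (add_le_add hb1 hb2)
      _ ≤ sinAngleSub S₁ T * ‖s₁ + s₂‖ + sinAngleSub S₂ T * ‖s₁ + s₂‖ := by
          exact add_le_add (mul_le_mul_of_nonneg_left h1 hA)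
            (mul_le_mul_of_nonneg_left h2 hB)
      _ = (sinAngleSub S₁ T + sinAngleSub S₂ T) * ‖s₁ + s₂‖ := by ring
  · exact add_nonneg (sinAngleSub_nonneg S₁ T) (sinAngleSub_nonneg S₂ T)
end

section
/- For the logarithmic spiral X = {(e^{t/tan β} cos t, e^{t/tan β} sin t) : t ∈ ℝ} with fixed 0 < β < π/2, the sine of the angle between the secant line from a point x ∈ X to the origin and the tangent line T_x X equals sin β, constant and nonzero for all x ∈ X; in particular Whitney's condition (b) fails for the pair (X, {0}) at the origin. -/
open RealInnerProductSpace Real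

/-- For the logarithmic spiral `γ(t) = (e^{t/tan β} cos t, e^{t/tan β} sin t)`
with `0 < β < π/2`, the sine of the angle between the secant line from
`x = γ(t)` to the origin (spanned by `x`) and the tangent line `T_x X`
(spanned by `γ'(t)`) is constantly equal to `sin β ≠ 0`; in particular
Whitney's condition (b) fails for the pair `(X, {0})` at the origin. -/
theorem log_spiral_constant_angle (β : ℝ) (hβ0 : 0 < β) (hβ : β < π / 2)
    (γ : ℝ → EuclideanSpace ℝ (Fin 2))
    (hγ : ∀ t : ℝ, γ t = ![Real.exp (t / Real.tan β) * Real.cos t,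
                           Real.exp (t / Real.tan β) * Real.sin t]) :
    ∀ t : ℝ,
      Real.sqrt (1 - ⟪‖γ t‖⁻¹ • γ t, ‖deriv γ t‖⁻¹ • deriv γ t⟫ ^ 2)
        = Real.sin β ∧ Real.sin β ≠ 0 := by
  intro t
  have hsb : 0 < Real.sin β := Real.sin_pos_of_pos_of_lt_pi hβ0 (by linarith [Real.pi_gt_three])
  have hcb : 0 < Real.cos β := Real.cos_pos_of_mem_Ioo ⟨by linarith [Real.pi_gt_three], hβ⟩
  have htan : Real.tan β = Real.sin β / Real.cos β := Real.tan_eq_sin_div_cos β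
  have hc : 0 < Real.tan β := by rw [htan]; positivity
  set c := Real.tan β with hcdef
  set E := Real.exp (t / c) with hE
  have hE0 : 0 < E := Real.exp_pos _
  -- derivative of the coordinate functions
  have hexp : HasDerivAt (fun s => Real.exp (s / c)) (E * (1 / c)) t := by
    have h1 : HasDerivAt (fun s : ℝ => s / c) (1 / c) t := by
      simpa using (hasDerivAt_id t).div_const c
    exact (Real.hasDerivAt_exp (t / c)).comp t h1
  have hf : HasDerivAt (fun s => Real.exp (s / c) * Real.cos s)
      (E * (1 / c) * Real.cos t + E * (-Real.sin t)) t := hexp.mul (Real.hasDerivAt_cos t)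
  have hg : HasDerivAt (fun s => Real.exp (s / c) * Real.sin s)
      (E * (1 / c) * Real.sin t + E * Real.cos t) t := hexp.mul (Real.hasDerivAt_sin t)
  set f' := E * (1 / c) * Real.cos t + E * (-Real.sin t) with hf'
  set g' := E * (1 / c) * Real.sin t + E * Real.cos t with hg'
  -- derivative of γ
  have hd : HasDerivAt γ (WithLp.toLp 2 ![f', g'] : EuclideanSpace ℝ (Fin 2)) t := by
    have h : HasDerivAt (fun s => (![Real.exp (s / c) * Real.cos s,
        Real.exp (s / c) * Real.sin s] : Fin 2 → ℝ)) ![f', g'] t := by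
      rw [hasDerivAt_pi]
      intro i
      fin_cases i
      · simpa using hf
      · simpa using hg
    have heq : γ = (PiLp.continuousLinearEquiv 2 ℝ
        (fun _ : Fin 2 => ℝ)).symm.toContinuousLinearMap ∘ fun s =>
        (![Real.exp (s / c) * Real.cos s, Real.exp (s / c) * Real.sin s] : Fin 2 → ℝ) := by
      funext s; exact congrArg (WithLp.toLp 2) (hγ s)
    rw [heq]
    exact (PiLp.continuousLinearEquiv 2 ℝ
      (fun _ : Fin 2 => ℝ)).symm.toContinuousLinearMap.hasFDerivAt.comp_hasDerivAt t h
  have hdγ : deriv γ t = (WithLp.toLp 2 ![f', g'] : EuclideanSpace ℝ (Fin 2)) := hd.deriv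
  -- norms and inner products
  have hpyth : Real.sin t ^ 2 + Real.cos t ^ 2 = 1 := Real.sin_sq_add_cos_sq t
  have hnγ : ‖γ t‖ = E := by
    rw [EuclideanSpace.norm_eq, hγ t]
    simp only [Fin.sum_univ_two, Matrix.cons_val_zero, Matrix.cons_val_one, Matrix.head_cons,
      Real.norm_eq_abs, sq_abs]
    rw [show (E * Real.cos t) ^ 2 + (E * Real.sin t) ^ 2 = E ^ 2 by nlinarith]
    exact Real.sqrt_sq hE0.le
  have hsc : 1 / c = Real.cos β / Real.sin β := by
    rw [htan, one_div_div]
  have hnd : ‖deriv γ t‖ = E / Real.sin β := by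
    rw [hdγ, EuclideanSpace.norm_eq]
    simp only [WithLp.ofLp_toLp, Fin.sum_univ_two, Matrix.cons_val_zero, Matrix.cons_val_one, Matrix.head_cons,
      Real.norm_eq_abs, sq_abs]
    have : f' ^ 2 + g' ^ 2 = (E / Real.sin β) ^ 2 := by
      rw [hf', hg', hsc]
      have hps : Real.sin β ^ 2 + Real.cos β ^ 2 = 1 := Real.sin_sq_add_cos_sq β
      field_simp
      linear_combination (Real.sin β ^ 2 + Real.cos β ^ 2) * hpyth + hps
    rw [this]
    exact Real.sqrt_sq (by positivity)
  have hinner : ⟪γ t, deriv γ t⟫ = E ^ 2 * Real.cos β / Real.sin β := by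
    rw [hdγ]
    simp only [hγ t, WithLp.ofLp_toLp, PiLp.inner_apply, RCLike.inner_apply, conj_trivial, Fin.sum_univ_two,
      Matrix.cons_val_zero, Matrix.cons_val_one, Matrix.head_cons]
    rw [hf', hg', hsc, ← hE]
    field_simp
    linear_combination Real.cos β * hpyth
  have hval : ⟪‖γ t‖⁻¹ • γ t, ‖deriv γ t‖⁻¹ • deriv γ t⟫ = Real.cos β := by
    rw [real_inner_smul_left, real_inner_smul_right, hinner, hnγ, hnd]
    field_simp
  rw [hval]
  constructor
  · rw [show 1 - Real.cos β ^ 2 = Real.sin β ^ 2 by nlinarith [Real.sin_sq_add_cos_sq β]]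
    exact Real.sqrt_sq hsb.le
  · exact ne_of_gt hsb
end

section
/- Let F(x,y,z,t) = x⁵ + txy⁶ + y⁷z + z¹⁵. There exist ε > 0 and an analytic function λ : (-ε, ε) → ℂ with λ(0) = 1 such that for all s with |s| < ε, the curve γ(s) = (s⁸, a·s⁵, (4/a⁷)·λ(s)·s⁵, -(5/a⁶)·s²) satisfies F(γ(s)) = 0, for any fixed nonzero a ∈ ℂ. -/
/-- For `F(x,y,z,t) = x⁵ + txy⁶ + y⁷z + z¹⁵` and any fixed nonzero `a ∈ ℂ`,
there are `ε > 0` and an analytic function `l : (-ε,ε) → ℂ` with `l 0 = 1`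
such that the curve `γ(s) = (s⁸, a·s⁵, (4/a⁷)·l(s)·s⁵, -(5/a⁶)·s²)` lies in
`F⁻¹(0)` for `|s| < ε`. -/
theorem briancon_speder_curve_on_variety
    (F : ℂ → ℂ → ℂ → ℂ → ℂ)
    (hF : ∀ x y z t : ℂ, F x y z t = x ^ 5 + t * x * y ^ 6 + y ^ 7 * z + z ^ 15)
    (a : ℂ) (ha : a ≠ 0) :
    ∃ ε > (0 : ℝ), ∃ l : ℝ → ℂ,
      AnalyticOnNhd ℝ l (Set.Ioo (-ε) ε) ∧ l 0 = 1 ∧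
      ∀ s : ℝ, |s| < ε →
        F ((s : ℂ) ^ 8) (a * (s : ℂ) ^ 5) ((4 / a ^ 7) * l s * (s : ℂ) ^ 5)
          (-(5 / a ^ 6) * (s : ℂ) ^ 2) = 0 := by
  set G : ℂ × ℂ → ℂ × ℂ :=
    fun p => (p.1, 4 * p.2 - 4 + (4 / a ^ 7) ^ 15 * p.2 ^ 15 * p.1 ^ 35) with hGdef
  have hGan : ∀ p : ℂ × ℂ, AnalyticAt ℂ G p := fun p =>
    analyticAt_fst.prod
      (((analyticAt_const.mul analyticAt_snd).sub analyticAt_const).add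
        ((analyticAt_const.mul (analyticAt_snd.pow 15)).mul (analyticAt_fst.pow 35)))
  set i : (ℂ × ℂ) ≃L[ℂ] (ℂ × ℂ) :=
    (ContinuousLinearEquiv.refl ℂ ℂ).prodCongr
      (ContinuousLinearEquiv.unitsEquivAut ℂ (Units.mk0 (4:ℂ) (by norm_num))) with hidef
  have hA : HasFDerivAt (fun p : ℂ × ℂ => 4 * p.2)
      ((4:ℂ) • ContinuousLinearMap.snd ℂ ℂ ℂ) ((0:ℂ), (1:ℂ)) :=
    (hasFDerivAt_snd).const_mul 4
  have hB : HasFDerivAt (fun p : ℂ × ℂ => (4 / a ^ 7) ^ 15 * p.2 ^ 15)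
      (((4 / a ^ 7) ^ 15 * (15 * (1:ℂ) ^ 14)) • ContinuousLinearMap.snd ℂ ℂ ℂ)
      ((0:ℂ), (1:ℂ)) := by
    have hg : HasDerivAt (fun y : ℂ => (4 / a ^ 7) ^ 15 * y ^ 15)
        ((4 / a ^ 7) ^ 15 * (15 * (1:ℂ) ^ 14)) 1 := by
      simpa using (hasDerivAt_pow 15 (1:ℂ)).const_mul ((4 / a ^ 7) ^ 15)
    have := hg.comp_hasFDerivAt ((0:ℂ), (1:ℂ))
      (hasFDerivAt_snd (𝕜 := ℂ) (E := ℂ) (F := ℂ) (p := ((0:ℂ),(1:ℂ))))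
    exact this
  have hC : HasFDerivAt (fun p : ℂ × ℂ => p.1 ^ 35)
      ((35 * (0:ℂ) ^ 34) • ContinuousLinearMap.fst ℂ ℂ ℂ) ((0:ℂ), (1:ℂ)) := by
    have hg : HasDerivAt (fun y : ℂ => y ^ 35) (35 * (0:ℂ) ^ 34) 0 := by
      simpa using hasDerivAt_pow 35 (0:ℂ)
    have := hg.comp_hasFDerivAt ((0:ℂ), (1:ℂ))
      (hasFDerivAt_fst (𝕜 := ℂ) (E := ℂ) (F := ℂ) (p := ((0:ℂ),(1:ℂ))))
    exact this
  have hprod := HasFDerivAt.prodMk (hasFDerivAt_fst (𝕜 := ℂ) (E := ℂ) (F := ℂ)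
      (p := ((0:ℂ),(1:ℂ)))) ((hA.sub_const 4).add (hB.mul hC))
  have hfderiv : fderiv ℂ G ((0:ℂ),(1:ℂ)) = (i : (ℂ × ℂ) →L[ℂ] (ℂ × ℂ)) := by
    rw [(show HasFDerivAt G _ _ from hprod).fderiv]
    refine ContinuousLinearMap.ext fun x => ?_
    refine Prod.ext ?_ ?_ <;>
      simp [hidef, ContinuousLinearEquiv.unitsEquivAut_apply] <;> ring
  have hst : HasStrictFDerivAt G (i : (ℂ × ℂ) →L[ℂ] (ℂ × ℂ)) ((0:ℂ),(1:ℂ)) :=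
    hfderiv ▸ (hGan _).hasStrictFDerivAt
  set f := HasStrictFDerivAt.toOpenPartialHomeomorph G hst with hfdef
  have hfcoe : ⇑f = G := HasStrictFDerivAt.toOpenPartialHomeomorph_coe hst
  have hsource : ((0:ℂ),(1:ℂ)) ∈ f.source := HasStrictFDerivAt.mem_toOpenPartialHomeomorph_source hst
  have hG01 : G ((0:ℂ),(1:ℂ)) = ((0:ℂ),(0:ℂ)) := by simp [hGdef]
  have hf01 : f ((0:ℂ),(1:ℂ)) = ((0:ℂ),(0:ℂ)) := by rw [hfcoe, hG01]
  have hsymm_an : AnalyticAt ℂ f.symm ((0:ℂ),(0:ℂ)) := by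
    have := f.analyticAt_symm' hsource (by rw [hfcoe]; exact hGan _)
      (by rw [hfcoe]; exact hfderiv)
    rwa [hf01] at this
  have hP2an : AnalyticAt ℂ (fun z : ℂ × ℂ => (f.symm z).2) ((0:ℂ),(0:ℂ)) :=
    analyticAt_snd.comp hsymm_an
  have htarget : f.target ∈ nhds (((0:ℂ),(0:ℂ)) : ℂ × ℂ) :=
    f.open_target.mem_nhds (hf01 ▸ f.map_source hsource)
  have hEv : ∀ᶠ z in nhds (((0:ℂ),(0:ℂ)) : ℂ × ℂ),
      AnalyticAt ℂ (fun z : ℂ × ℂ => (f.symm z).2) z ∧ G (f.symm z) = z := by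
    filter_upwards [hP2an.eventually_analyticAt, htarget] with z h1 h2
    exact ⟨h1, by rw [← hfcoe]; exact f.right_inv h2⟩
  have hjan : ∀ s : ℝ, AnalyticAt ℝ (fun s : ℝ => (((s:ℂ), (0:ℂ)) : ℂ × ℂ)) s := fun s =>
    (Complex.ofRealCLM.analyticAt s).prod analyticAt_const
  have hEv' : ∀ᶠ s : ℝ in nhds 0,
      AnalyticAt ℂ (fun z : ℂ × ℂ => (f.symm z).2) (((s:ℂ), 0)) ∧
      G (f.symm (((s:ℂ), 0))) = (((s:ℂ), 0)) := by
    have hjc : ContinuousAt (fun s : ℝ => (((s:ℂ), (0:ℂ)) : ℂ × ℂ)) 0 :=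
      (hjan 0).continuousAt
    have h0 : (fun s : ℝ => (((s:ℂ), (0:ℂ)) : ℂ × ℂ)) 0 = ((0:ℂ),(0:ℂ)) := by simp
    exact hjc.eventually (by rw [h0]; exact hEv)
  rw [Metric.eventually_nhds_iff] at hEv'
  obtain ⟨ε, hε, hball⟩ := hEv'
  refine ⟨ε, hε, fun s : ℝ => (f.symm (((s:ℂ), 0))).2, ?_, ?_, ?_⟩
  · intro s hs
    have hd : dist s 0 < ε := by
      rw [Real.dist_eq, sub_zero]; exact abs_lt.mpr ⟨hs.1, hs.2⟩
    have := AnalyticAt.comp (g := fun z : ℂ × ℂ => (f.symm z).2)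
      (f := fun s : ℝ => (((s:ℂ), (0:ℂ)) : ℂ × ℂ))
      ((hball hd).1.restrictScalars (𝕜 := ℝ)) (hjan s)
    exact this
  · have h01 : f.symm ((0:ℂ),(0:ℂ)) = ((0:ℂ),(1:ℂ)) := by
      rw [← hf01]; exact f.left_inv hsource
    simp only [Complex.ofReal_zero]
    rw [h01]
  · intro s hs
    have hd : dist s 0 < ε := by rw [Real.dist_eq, sub_zero]; exact hs
    obtain ⟨-, hGe⟩ := hball hd
    have h1 : (f.symm (((s:ℂ), 0))).1 = (s:ℂ) := congrArg Prod.fst hGe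
    have h2 := congrArg Prod.snd hGe
    simp only [hGdef, h1] at h2
    rw [hF]
    field_simp at h2 ⊢
    linear_combination (s:ℂ) ^ 40 * h2
end

section
/- With hypotheses as in the previous lemma (F analytic, F∘γ ≡ 0, x(s) = As^a + …, grad_x F∘γ(s) = Bs^b + … with A,B ≠ 0): the condition ν(Σᵢ xᵢ·(∂F/∂xᵢ)∘γ) > a + b holds if and only if ν(t·(∂F/∂t)∘γ) > a + b. (Briançon–Speder's lemma: (b^π) along the arc is equivalent to ν(t) + ν(∂F/∂t∘γ) > ν(x) + ν(J_x F∘γ).) -/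
open Filter Asymptotics Topology

noncomputable def AnalyticAt.order {f : ℂ → ℂ} {z₀ : ℂ} (_ : AnalyticAt ℂ f z₀) : ℕ∞ :=
  analyticOrderAt f z₀

lemma AnalyticAt.order_eq_top_iff {f : ℂ → ℂ} {z₀ : ℂ} (hf : AnalyticAt ℂ f z₀) :
    hf.order = ⊤ ↔ ∀ᶠ z in 𝓝 z₀, f z = 0 :=
  analyticOrderAt_eq_top

lemma AnalyticAt.order_eq_nat_iff {f : ℂ → ℂ} {z₀ : ℂ} (hf : AnalyticAt ℂ f z₀) (n : ℕ) :
    hf.order = n ↔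
      ∃ (g : ℂ → ℂ), AnalyticAt ℂ g z₀ ∧ g z₀ ≠ 0 ∧ ∀ᶠ z in 𝓝 z₀, f z = (z - z₀) ^ n • g z :=
  hf.analyticOrderAt_eq_natCast

lemma aux_deriv {u : ℂ → ℂ} (hu : AnalyticAt ℂ u 0) : AnalyticAt ℂ (deriv u) 0 :=
  (((ContinuousLinearMap.apply ℂ ℂ (1:ℂ)).analyticAt _).comp hu.fderiv).congr
    (by filter_upwards with s using (fderiv_apply_one_eq_deriv).symm)

lemma aux_order_ge_iff {f : ℂ → ℂ} (hf : AnalyticAt ℂ f 0) (k : ℕ) :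
    (↑k ≤ hf.order) ↔ ∃ g : ℂ → ℂ, AnalyticAt ℂ g 0 ∧ ∀ᶠ s in 𝓝 (0:ℂ), f s = s ^ k * g s := by
  constructor
  · intro hk
    rcases eq_or_ne hf.order ⊤ with htop | hne
    · refine ⟨0, analyticAt_const, ?_⟩
      filter_upwards [hf.order_eq_top_iff.1 htop] with s hs
      simp [hs]
    · lift hf.order to ℕ using hne with m hm
      obtain ⟨u, hu, hu0, hfu⟩ := (hf.order_eq_nat_iff m).1 hm.symm
      have hkm : k ≤ m := by exact_mod_cast hk
      refine ⟨fun s => s ^ (m - k) * u s, (analyticAt_id.pow _).mul hu, ?_⟩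
      filter_upwards [hfu] with s hs
      rw [hs]
      simp only [sub_zero, smul_eq_mul]
      rw [← mul_assoc, ← pow_add, Nat.add_sub_cancel' hkm]
  · rintro ⟨g, hg, hfg⟩
    by_contra hlt
    push_neg at hlt
    have hne : hf.order ≠ ⊤ := by intro h; rw [h] at hlt; exact absurd hlt (by simp)
    lift hf.order to ℕ using hne with m hm
    have hmk : m < k := by exact_mod_cast hlt
    obtain ⟨u, hu, hu0, hfu⟩ := (hf.order_eq_nat_iff m).1 hm.symm
    have h1 : Tendsto u (𝓝[≠] (0:ℂ)) (𝓝 (u 0)) :=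
      hu.continuousAt.continuousWithinAt.tendsto
    have h2 : Tendsto (fun s : ℂ => s ^ (k - m) * g s) (𝓝[≠] (0:ℂ)) (𝓝 0) := by
      have : ContinuousAt (fun s : ℂ => s ^ (k - m) * g s) 0 :=
        ((continuous_id.pow _).continuousAt).mul hg.continuousAt
      have h0 : (0:ℂ) ^ (k - m) * g 0 = 0 := by
        rw [zero_pow (by omega), zero_mul]
      have := this.continuousWithinAt (s := {(0:ℂ)}ᶜ) |>.tendsto
      rwa [h0] at this
    have heq : u =ᶠ[𝓝[≠] (0:ℂ)] fun s => s ^ (k - m) * g s := by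
      filter_upwards [eventually_nhdsWithin_of_eventually_nhds (hfu.and hfg),
        self_mem_nhdsWithin] with s hs hs0
      have h3 : s ^ m * u s = s ^ k * g s := by
        have := hs.1; rw [sub_zero, smul_eq_mul] at this; rw [← this, hs.2]
      have h4 : s ^ k = s ^ m * s ^ (k - m) := by
        rw [← pow_add, Nat.add_sub_cancel' hmk.le]
      rw [h4, mul_assoc] at h3
      exact mul_left_cancel₀ (pow_ne_zero _ hs0) h3
    exact hu0 (tendsto_nhds_unique (h1.congr' heq) h2)

lemma aux_littleO_iff {f : ℂ → ℂ} (hf : AnalyticAt ℂ f 0) (N : ℕ) :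
    (f =o[𝓝 (0:ℂ)] fun s => s ^ N) ↔ (↑(N+1) ≤ hf.order) := by
  constructor
  · intro h
    rcases eq_or_ne hf.order ⊤ with htop | hne
    · rw [htop]; exact le_top
    lift hf.order to ℕ using hne with m hm
    obtain ⟨u, hu, hu0, hfu⟩ := (hf.order_eq_nat_iff m).1 hm.symm
    by_contra hlt
    push_neg at hlt
    have hmN : m ≤ N := by exact_mod_cast Order.lt_succ_iff.1 (by exact_mod_cast hlt)
    -- show u tends to 0 on punctured nhds, contradicting u 0 ≠ 0
    have h2 : Tendsto u (𝓝[≠] (0:ℂ)) (𝓝 0) := by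
      rw [Metric.tendsto_nhds]
      intro ε hε
      have h3 := (isLittleO_iff.1 h) (half_pos hε)
      filter_upwards [eventually_nhdsWithin_of_eventually_nhds (h3.and hfu),
        eventually_nhdsWithin_of_eventually_nhds (Metric.eventually_nhds_iff.2
          ⟨1, one_pos, fun {s} hs => le_of_lt (by simpa using hs)⟩),
        self_mem_nhdsWithin] with s hs hs1 hs0
      have hfs := hs.2
      rw [sub_zero, smul_eq_mul] at hfs
      have hb : ‖f s‖ ≤ ε/2 * ‖s‖ ^ N := by simpa using hs.1
      have hpow : ‖s‖ ^ N ≤ ‖s‖ ^ m := pow_le_pow_of_le_one (norm_nonneg _) hs1 hmN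
      have hsm : (0:ℝ) < ‖s‖ ^ m := pow_pos (norm_pos_iff.2 hs0) m
      have : ‖s‖ ^ m * ‖u s‖ ≤ ε/2 * ‖s‖ ^ m := by
        calc ‖s‖ ^ m * ‖u s‖ = ‖f s‖ := by rw [hfs, norm_mul, norm_pow]
        _ ≤ ε/2 * ‖s‖ ^ N := hb
        _ ≤ ε/2 * ‖s‖ ^ m := by nlinarith
      have hus : ‖u s‖ ≤ ε/2 := by nlinarith
      simpa [dist_eq_norm] using lt_of_le_of_lt hus (half_lt_self hε)
    have h1 : Tendsto u (𝓝[≠] (0:ℂ)) (𝓝 (u 0)) :=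
      hu.continuousAt.continuousWithinAt.tendsto
    exact hu0 (tendsto_nhds_unique h1 h2)
  · intro h
    obtain ⟨g, hg, hfg⟩ := (aux_order_ge_iff hf (N+1)).1 h
    have h1 : (fun s : ℂ => s * g s) =o[𝓝 (0:ℂ)] (fun _ => (1:ℂ)) := by
      rw [isLittleO_one_iff]
      have : ContinuousAt (fun s : ℂ => s * g s) 0 := continuousAt_id.mul hg.continuousAt
      simpa using this.tendsto
    have h2 := h1.mul_isBigO (isBigO_refl (fun s : ℂ => s ^ N) (𝓝 0))
    refine (h2.congr' ?_ ?_).congr_left (fun s => rfl)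
    · filter_upwards [hfg] with s hs
      rw [hs]; ring
    · filter_upwards with s; simp

lemma aux_order_mul {f g : ℂ → ℂ} (hf : AnalyticAt ℂ f 0) (hg : AnalyticAt ℂ g 0)
    (hfg : AnalyticAt ℂ (fun s => f s * g s) 0) :
    hfg.order = hf.order + hg.order := by
  rcases eq_or_ne hf.order ⊤ with htop | hne
  · rw [htop, top_add, hfg.order_eq_top_iff]
    filter_upwards [hf.order_eq_top_iff.1 htop] with s hs
    simp [hs]
  rcases eq_or_ne hg.order ⊤ with gtop | gne
  · rw [gtop, add_top, hfg.order_eq_top_iff]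
    filter_upwards [hg.order_eq_top_iff.1 gtop] with s hs
    simp [hs]
  lift hf.order to ℕ using hne with m hm
  lift hg.order to ℕ using gne with k hk
  obtain ⟨u, hu, hu0, hfu⟩ := (hf.order_eq_nat_iff m).1 hm.symm
  obtain ⟨v, hv, hv0, hgv⟩ := (hg.order_eq_nat_iff k).1 hk.symm
  have : hfg.order = ↑(m + k) := by
    rw [hfg.order_eq_nat_iff]
    refine ⟨fun s => u s * v s, hu.mul hv, mul_ne_zero hu0 hv0, ?_⟩
    filter_upwards [hfu, hgv] with s h1 h2
    rw [h1, h2]; simp only [sub_zero, smul_eq_mul, pow_add]; ring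
  rw [this]; push_cast; rfl

lemma aux_order_sderiv {f : ℂ → ℂ} (hf : AnalyticAt ℂ f 0) (hf0 : f 0 = 0)
    (h2 : AnalyticAt ℂ (fun s => s * deriv f s) 0) :
    h2.order = hf.order := by
  rcases eq_or_ne hf.order ⊤ with htop | hne
  · rw [htop, h2.order_eq_top_iff]
    have hd : deriv f =ᶠ[𝓝 (0:ℂ)] fun _ => 0 := by
      have : f =ᶠ[𝓝 (0:ℂ)] fun _ => 0 := hf.order_eq_top_iff.1 htop
      simpa [deriv_const'] using this.deriv
    filter_upwards [hd] with s hs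
    simp [hs]
  lift hf.order to ℕ using hne with m hm
  obtain ⟨u, hu, hu0, hfu⟩ := (hf.order_eq_nat_iff m).1 hm.symm
  have hm1 : 1 ≤ m := by
    rcases Nat.eq_zero_or_pos m with h0 | h; swap; · exact h
    exfalso
    have := hfu.self_of_nhds
    rw [h0, hf0] at this
    simp at this
    exact hu0 this.symm
  rw [h2.order_eq_nat_iff]
  have hmc : (m:ℂ) ≠ 0 := Nat.cast_ne_zero.2 (by omega)
  refine ⟨fun s => (m:ℂ) * u s + s * deriv u s, (analyticAt_const.mul hu).add
    (analyticAt_id.mul (aux_deriv hu)), by simpa using mul_ne_zero hmc hu0, ?_⟩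
  have hdf : deriv f =ᶠ[𝓝 (0:ℂ)] deriv (fun s => s ^ m * u s) := by
    apply Filter.EventuallyEq.deriv
    filter_upwards [hfu] with s hs; rw [hs]; simp
  filter_upwards [hdf, hu.eventually_analyticAt] with s hs hus
  have hder : HasDerivAt (fun z : ℂ => z ^ m * u z)
      ((m : ℂ) * s ^ (m-1) * u s + s ^ m * deriv u s) s :=
    (hasDerivAt_pow m s).mul hus.differentiableAt.hasDerivAt
  rw [hs, hder.deriv]
  have hsp : s * s ^ (m - 1) = s ^ m := by
    rw [← pow_succ']; congr 1; omega
  simp only [sub_zero, smul_eq_mul]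
  calc s * ((m:ℂ) * s ^ (m-1) * u s + s ^ m * deriv u s)
      = (s * s^(m-1)) * ((m:ℂ) * u s) + s ^ m * (s * deriv u s) := by ring
    _ = s ^ m * ((m:ℂ) * u s + s * deriv u s) := by rw [hsp]; ring

lemma aux_coeff_zero {c : ℂ} {N : ℕ}
    (h : (fun s : ℂ => c * s ^ N) =o[𝓝 (0:ℂ)] fun s => s ^ N) : c = 0 := by
  by_contra hc
  have h2 := (isLittleO_iff.1 h) (half_pos (norm_pos_iff.2 hc))
  have h3 : ∀ᶠ s in 𝓝[≠] (0:ℂ), ‖c * s ^ N‖ ≤ ‖c‖/2 * ‖s ^ N‖ ∧ s ≠ 0 :=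
    (eventually_nhdsWithin_of_eventually_nhds h2).and self_mem_nhdsWithin
  obtain ⟨s, hs, hs0⟩ := h3.exists
  have hs0' : s ≠ 0 := hs0
  rw [norm_mul, norm_pow] at hs
  have hsp : (0:ℝ) < ‖s‖ ^ N := pow_pos (norm_pos_iff.2 hs0') N
  nlinarith [norm_pos_iff.2 hc]

lemma aux_sum_prod {n : ℕ} {p q : ℂ → Fin n → ℂ} {C D : Fin n → ℂ} {aa bb : ℕ}
    (hp : ∀ i, (fun s => p s i - C i * s ^ aa) =o[𝓝 (0:ℂ)] fun s => s ^ aa)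
    (hq : ∀ i, (fun s => q s i - D i * s ^ bb) =o[𝓝 (0:ℂ)] fun s => s ^ bb) :
    (fun s => (∑ i, p s i * q s i) - (∑ i, C i * D i) * s ^ (aa+bb)) =o[𝓝 (0:ℂ)]
      fun s => s ^ (aa+bb) := by
  have key : ∀ i : Fin n, (fun s => p s i * q s i - C i * D i * s ^ (aa+bb)) =o[𝓝 (0:ℂ)]
      fun s => s ^ (aa+bb) := by
    intro i
    have hqO : (fun s => q s i) =O[𝓝 (0:ℂ)] fun s => s ^ bb := by
      have h1 : (fun s : ℂ => D i * s ^ bb) =O[𝓝 (0:ℂ)] fun s => s ^ bb :=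
        (isBigO_refl _ _).const_mul_left _
      have := (hq i).isBigO.add h1
      refine this.congr_left fun s => by ring
    have t1 := (hp i).mul_isBigO hqO
    have h2 : (fun s : ℂ => C i * s ^ aa) =O[𝓝 (0:ℂ)] fun s => s ^ aa :=
      (isBigO_refl _ _).const_mul_left _
    have t2 := h2.mul_isLittleO (hq i)
    exact (t1.add t2).congr (fun s => by rw [pow_add]; ring)
      (fun s => (pow_add s aa bb).symm)
  have := IsLittleO.sum (fun i (_ : i ∈ Finset.univ) => key i)
  refine this.congr_left fun s => ?_
  simp only [Finset.sum_apply]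
  rw [Finset.sum_sub_distrib, ← Finset.sum_mul]

lemma aux_sderiv_littleO {f : ℂ → ℂ} (hf : AnalyticAt ℂ f 0) (c : ℂ) {m : ℕ} (hm : 1 ≤ m)
    (h : (fun s => f s - c * s ^ m) =o[𝓝 (0:ℂ)] fun s => s ^ m) :
    (fun s => s * deriv f s - m * c * s ^ m) =o[𝓝 (0:ℂ)] fun s => s ^ m := by
  set r : ℂ → ℂ := fun s => f s - c * s ^ m with hr_def
  have hr : AnalyticAt ℂ r 0 := hf.sub (analyticAt_const.mul (analyticAt_id.pow _))
  have hord : (↑(m+1) : ℕ∞) ≤ hr.order := (aux_littleO_iff hr m).1 h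
  have hr0 : r 0 = 0 := by
    obtain ⟨g, hg, hrg⟩ := (aux_order_ge_iff hr (m+1)).1 hord
    have := hrg.self_of_nhds
    simpa [zero_pow] using this
  have hsr : AnalyticAt ℂ (fun s => s * deriv r s) 0 := analyticAt_id.mul (aux_deriv hr)
  have h2 : (fun s => s * deriv r s) =o[𝓝 (0:ℂ)] fun s => s ^ m := by
    rw [aux_littleO_iff hsr m, aux_order_sderiv hr hr0 hsr]
    exact hord
  refine h2.congr' ?_ EventuallyEq.rfl
  filter_upwards [hf.eventually_analyticAt] with s hfs
  have hdr : HasDerivAt r (deriv f s - c * (m * s ^ (m-1))) s := by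
    exact (hfs.differentiableAt.hasDerivAt).sub (((hasDerivAt_pow m s)).const_mul c)
  rw [hdr.deriv]
  have hsp : s * s ^ (m - 1) = s ^ m := by rw [← pow_succ']; congr 1; omega
  calc s * (deriv f s - c * (m * s ^ (m-1)))
      = s * deriv f s - (m * c) * (s * s ^ (m-1)) := by ring
    _ = s * deriv f s - m * c * s ^ m := by rw [hsp]

lemma aux_clm_decomp {n : ℕ} (L : ((Fin n → ℂ) × ℂ) →L[ℂ] ℂ) (w : (Fin n → ℂ) × ℂ) :
    L w = (∑ i, w.1 i * L (Pi.single i 1, 0)) + w.2 * L (0, 1) := by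
  have hw : w = (∑ i, w.1 i • ((Pi.single i 1, 0) : (Fin n → ℂ) × ℂ))
      + w.2 • ((0 : Fin n → ℂ), (1:ℂ)) := by
    rw [Prod.ext_iff]
    constructor
    · simp only [Prod.fst_add, Prod.fst_sum, Prod.smul_fst, Prod.smul_snd, smul_zero]
      funext j
      simp [Finset.sum_apply, Pi.single_apply]
    · simp [Prod.snd_add, Prod.snd_sum]
  conv_lhs => rw [hw]
  rw [map_add, map_sum]
  simp only [Prod.smul_mk, smul_zero, smul_eq_mul, mul_zero, mul_one]
  congr 1
  · apply Finset.sum_congr rfl; intro i _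
    set v : Fin n → ℂ := Pi.single i (1:ℂ) with hv
    have h : ((w.1 i • v, (0:ℂ)) : (Fin n → ℂ) × ℂ)
        = w.1 i • ((v, 0) : (Fin n → ℂ) × ℂ) := by
      rw [Prod.smul_mk, smul_zero]
    rw [h, map_smul, smul_eq_mul]
  · have h : ((0 : Fin n → ℂ), w.2) = w.2 • (((0 : Fin n → ℂ), (1:ℂ))) := by
      simp [Prod.smul_mk]
    rw [h, map_smul, smul_eq_mul]

lemma aux_iff_coeff {S : ℂ → ℂ} {c : ℂ} {N : ℕ}
    (h : (fun s => S s - c * s ^ N) =o[𝓝 (0:ℂ)] fun s => s ^ N) :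
    (S =o[𝓝 (0:ℂ)] fun s => s ^ N) ↔ c = 0 := by
  constructor
  · intro hS
    exact aux_coeff_zero ((hS.sub h).congr_left fun s => by ring)
  · intro hc
    subst hc
    exact h.congr_left fun s => by ring

set_option maxHeartbeats 1000000 in
/-- Briançon–Speder's lemma.  With `F` analytic, `F∘γ ≡ 0`,
`x(s) = A s^a + o(s^a)`, `(∂F/∂xᵢ)∘γ(s) = B s^b + o(s^b)` with `A, B ≠ 0`:
the condition `ν(Σᵢ xᵢ·(∂F/∂xᵢ)∘γ) > a + b` holds if and only if
`ν(t·(∂F/∂t)∘γ) > a + b`; i.e. `(b^π)` along the arc is equivalent to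
`ν(t) + ν(∂F/∂t∘γ) > ν(x) + ν(J_x F∘γ)`. -/
theorem briancon_speder_lemma
    (n : ℕ) (F : (Fin n → ℂ) × ℂ → ℂ)
    (hF : AnalyticOnNhd ℂ F Set.univ)
    (hF0 : ∀ t : ℂ, F (0, t) = 0)
    (γ : ℂ → (Fin n → ℂ) × ℂ)
    (hγ : AnalyticAt ℂ γ 0) (hγ0 : γ 0 = 0)
    (hFγ : ∀ᶠ s in nhds (0 : ℂ), F (γ s) = 0)
    (a b : ℕ) (A B : Fin n → ℂ) (hA : A ≠ 0) (hB : B ≠ 0)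
    (hx : (fun s : ℂ => (γ s).1 - fun i => A i * s ^ a) =o[nhds 0] fun s => s ^ a)
    (hgrad : (fun s : ℂ =>
        (fun i => fderiv ℂ F (γ s) (Pi.single i 1, 0)) - fun i => B i * s ^ b)
        =o[nhds 0] fun s => s ^ b) :
    ((fun s : ℂ => ∑ i, (γ s).1 i * fderiv ℂ F (γ s) (Pi.single i 1, 0))
        =o[nhds 0] fun s => s ^ (a + b)) ↔
    ((fun s : ℂ => (γ s).2 * fderiv ℂ F (γ s) (0, 1))
        =o[nhds 0] fun s => s ^ (a + b)) := by
  classical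
  -- analyticity of the building blocks
  have hDFγ : AnalyticAt ℂ (fun s => fderiv ℂ F (γ s)) 0 :=
    ((hF.fderiv) (γ 0) trivial).comp hγ
  have hgA : ∀ i, AnalyticAt ℂ (fun s => fderiv ℂ F (γ s) (Pi.single i 1, 0)) 0 := fun i =>
    ((ContinuousLinearMap.apply ℂ ℂ ((Pi.single i 1, 0) : (Fin n → ℂ) × ℂ)).analyticAt
      _).comp hDFγ
  have hφA : AnalyticAt ℂ (fun s => fderiv ℂ F (γ s) (0, 1)) 0 :=
    ((ContinuousLinearMap.apply ℂ ℂ (((0 : Fin n → ℂ), (1:ℂ)))).analyticAt _).comp hDFγ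
  have hxA : ∀ i, AnalyticAt ℂ (fun s => (γ s).1 i) 0 := fun i =>
    (((ContinuousLinearMap.proj (R := ℂ) (φ := fun _ : Fin n => ℂ) i).comp
      (ContinuousLinearMap.fst ℂ (Fin n → ℂ) ℂ)).analyticAt _).comp hγ
  have htA : AnalyticAt ℂ (fun s => (γ s).2) 0 :=
    ((ContinuousLinearMap.snd ℂ (Fin n → ℂ) ℂ).analyticAt _).comp hγ
  have ht0 : (fun s => (γ s).2) 0 = 0 := by simp [hγ0]
  -- eventual differentiability of γ
  have hγd : ∀ᶠ s in 𝓝 (0:ℂ), DifferentiableAt ℂ γ s :=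
    hγ.eventually_analyticAt.mono fun s h => h.differentiableAt
  -- chain rule : the derivative of F ∘ γ vanishes
  have hFγ' : (fun s => F (γ s)) =ᶠ[𝓝 (0:ℂ)] fun _ => (0:ℂ) := hFγ
  have hchain : ∀ᶠ s in 𝓝 (0:ℂ), fderiv ℂ F (γ s) (deriv γ s) = 0 := by
    filter_upwards [hγd, hFγ'.deriv] with s hds hzero
    have h1 : HasDerivAt (fun z => F (γ z)) (fderiv ℂ F (γ s) (deriv γ s)) s :=
      ((hF (γ s) trivial).differentiableAt.hasFDerivAt).comp_hasDerivAt s hds.hasDerivAt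
    calc fderiv ℂ F (γ s) (deriv γ s) = deriv (fun z => F (γ z)) s := h1.deriv.symm
      _ = deriv (fun _ : ℂ => (0:ℂ)) s := hzero
      _ = 0 := by simp
  -- derivatives of the components
  have hxd : ∀ᶠ s in 𝓝 (0:ℂ), ∀ i, deriv (fun z => (γ z).1 i) s = (deriv γ s).1 i := by
    filter_upwards [hγd] with s hds i
    have h1 : HasDerivAt (fun z => (γ z).1 i) ((deriv γ s).1 i) s :=
      (((ContinuousLinearMap.proj (R := ℂ) (φ := fun _ : Fin n => ℂ) i).comp
        (ContinuousLinearMap.fst ℂ (Fin n → ℂ) ℂ)).hasFDerivAt).comp_hasDerivAt s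
          hds.hasDerivAt
    exact h1.deriv
  have htd : ∀ᶠ s in 𝓝 (0:ℂ), deriv (fun z => (γ z).2) s = (deriv γ s).2 := by
    filter_upwards [hγd] with s hds
    have h1 : HasDerivAt (fun z => (γ z).2) ((deriv γ s).2) s :=
      ((ContinuousLinearMap.snd ℂ (Fin n → ℂ) ℂ).hasFDerivAt).comp_hasDerivAt s hds.hasDerivAt
    exact h1.deriv
  -- key identity
  have hkey : ∀ᶠ s in 𝓝 (0:ℂ),
      (∑ i, (s * deriv (fun z => (γ z).1 i) s) * fderiv ℂ F (γ s) (Pi.single i 1, 0))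
        + (s * deriv (fun z => (γ z).2) s) * fderiv ℂ F (γ s) (0, 1) = 0 := by
    filter_upwards [hchain, hxd, htd] with s h1 h2 h3
    have h4 := aux_clm_decomp (fderiv ℂ F (γ s)) (deriv γ s)
    rw [h1] at h4
    have h5 : (∑ i, (s * (deriv γ s).1 i) * fderiv ℂ F (γ s) (Pi.single i 1, 0))
        + (s * (deriv γ s).2) * fderiv ℂ F (γ s) (0, 1)
        = s * ((∑ i, (deriv γ s).1 i * fderiv ℂ F (γ s) (Pi.single i 1, 0))
          + (deriv γ s).2 * fderiv ℂ F (γ s) (0, 1)) := by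
      rw [mul_add, Finset.mul_sum]
      congr 1
      · exact Finset.sum_congr rfl fun i _ => by ring
      · ring
    simp only [fun i => h2 i, h3]
    rw [h5, ← h4, mul_zero]
  -- componentwise little-o facts
  have hxo : ∀ i, (fun s => (γ s).1 i - A i * s ^ a) =o[𝓝 (0:ℂ)] fun s => s ^ a := by
    intro i
    have h1 : (fun s => ((γ s).1 - fun j => A j * s ^ a) i) =o[𝓝 (0:ℂ)] fun s => s ^ a :=
      (isBigO_of_le _ fun s => norm_le_pi_norm ((γ s).1 - fun j => A j * s ^ a) i
        ).trans_isLittleO hx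
    exact h1.congr_left fun s => by simp
  have hgo : ∀ i, (fun s => fderiv ℂ F (γ s) (Pi.single i 1, 0) - B i * s ^ b)
      =o[𝓝 (0:ℂ)] fun s => s ^ b := by
    intro i
    have h1 : (fun s => ((fun j => fderiv ℂ F (γ s) (Pi.single j 1, 0))
        - fun j => B j * s ^ b) i) =o[𝓝 (0:ℂ)] fun s => s ^ b :=
      (isBigO_of_le _ fun s => norm_le_pi_norm _ i).trans_isLittleO hgrad
    exact h1.congr_left fun s => by simp
  -- a ≥ 1
  have ha1 : 1 ≤ a := by
    by_contra hlt
    have ha0 : a = 0 := by omega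
    obtain ⟨i, hAi⟩ := Function.ne_iff.1 hA
    have h1 := hxo i
    rw [ha0] at h1
    simp only [pow_zero, mul_one] at h1
    rw [isLittleO_one_iff] at h1
    have h2 : Tendsto (fun s => (γ s).1 i - A i) (𝓝 (0:ℂ)) (𝓝 ((γ 0).1 i - A i)) :=
      ((hxA i).continuousAt.sub continuousAt_const).tendsto
    have h3 := tendsto_nhds_unique h2 h1
    rw [hγ0] at h3
    simp only [Prod.fst_zero, Pi.zero_apply, zero_sub, neg_eq_zero] at h3
    exact hAi h3
  -- sum little-o facts
  have hS1 : (fun s : ℂ => (∑ i, (γ s).1 i * fderiv ℂ F (γ s) (Pi.single i 1, 0))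
      - (∑ i, A i * B i) * s ^ (a+b)) =o[𝓝 (0:ℂ)] fun s => s ^ (a+b) :=
    aux_sum_prod (p := fun s i => (γ s).1 i)
      (q := fun s i => fderiv ℂ F (γ s) (Pi.single i 1, 0)) (C := A) (D := B) hxo hgo
  have hsxo : ∀ i, (fun s => s * deriv (fun z => (γ z).1 i) s - ((a:ℂ) * A i) * s ^ a)
      =o[𝓝 (0:ℂ)] fun s => s ^ a := fun i => aux_sderiv_littleO (hxA i) (A i) ha1 (hxo i)
  have hS2 : (fun s : ℂ => (∑ i, (s * deriv (fun z => (γ z).1 i) s)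
        * fderiv ℂ F (γ s) (Pi.single i 1, 0))
      - (∑ i, ((a:ℂ) * A i) * B i) * s ^ (a+b)) =o[𝓝 (0:ℂ)] fun s => s ^ (a+b) :=
    aux_sum_prod (p := fun s i => s * deriv (fun z => (γ z).1 i) s)
      (q := fun s i => fderiv ℂ F (γ s) (Pi.single i 1, 0)) (C := fun i => (a:ℂ) * A i)
      (D := B) hsxo hgo
  -- the equivalences
  have iff1 := aux_iff_coeff hS1
  have iff2 := aux_iff_coeff hS2
  have hsum : (∑ i, ((a:ℂ) * A i) * B i) = (a : ℂ) * ∑ i, A i * B i := by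
    rw [Finset.mul_sum]
    exact Finset.sum_congr rfl fun i _ => by ring
  have haC : (a : ℂ) ≠ 0 := Nat.cast_ne_zero.2 (by omega)
  have iff2' : ((fun s : ℂ => ∑ i, (s * deriv (fun z => (γ z).1 i) s)
        * fderiv ℂ F (γ s) (Pi.single i 1, 0)) =o[𝓝 (0:ℂ)] fun s => s ^ (a+b))
      ↔ (∑ i, A i * B i) = 0 := by
    rw [iff2, hsum, mul_eq_zero]
    simp [haC]
  -- transfer via the key identity
  have heq : (fun s : ℂ => ∑ i, (s * deriv (fun z => (γ z).1 i) s)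
        * fderiv ℂ F (γ s) (Pi.single i 1, 0))
      =ᶠ[𝓝 (0:ℂ)] fun s => -((s * deriv (fun z => (γ z).2) s) * fderiv ℂ F (γ s) (0, 1)) := by
    filter_upwards [hkey] with s hs
    linear_combination hs
  have iff3 : ((fun s : ℂ => ∑ i, (s * deriv (fun z => (γ z).1 i) s)
        * fderiv ℂ F (γ s) (Pi.single i 1, 0)) =o[𝓝 (0:ℂ)] fun s => s ^ (a+b))
      ↔ ((fun s : ℂ => (s * deriv (fun z => (γ z).2) s) * fderiv ℂ F (γ s) (0, 1))
        =o[𝓝 (0:ℂ)] fun s => s ^ (a+b)) := by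
    constructor
    · intro h
      exact ((h.congr' heq EventuallyEq.rfl).neg_left).congr_left fun s => neg_neg _
    · intro h
      exact (h.neg_left).congr' heq.symm EventuallyEq.rfl
  have hstA : AnalyticAt ℂ
      (fun s => (s * deriv (fun z => (γ z).2) s) * fderiv ℂ F (γ s) (0, 1)) 0 :=
    (analyticAt_id.mul (aux_deriv htA)).mul hφA
  have htφA : AnalyticAt ℂ (fun s => (γ s).2 * fderiv ℂ F (γ s) (0, 1)) 0 := htA.mul hφA
  have iff4 : ((fun s : ℂ => (s * deriv (fun z => (γ z).2) s) * fderiv ℂ F (γ s) (0, 1))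
        =o[𝓝 (0:ℂ)] fun s => s ^ (a+b))
      ↔ ((fun s : ℂ => (γ s).2 * fderiv ℂ F (γ s) (0, 1))
        =o[𝓝 (0:ℂ)] fun s => s ^ (a+b)) := by
    rw [aux_littleO_iff hstA (a+b), aux_littleO_iff htφA (a+b)]
    have e1 := aux_order_mul (analyticAt_id.mul (aux_deriv htA)) hφA hstA
    have e2 := aux_order_mul htA hφA htφA
    have e3 := aux_order_sderiv htA ht0 (analyticAt_id.mul (aux_deriv htA))
    rw [e1, e2, e3]
  exact iff1.trans ((iff2'.symm.trans iff3).trans iff4)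
end

section
/- Let F(x,y,z,t) = x⁵ + txy⁶ + y⁷z + z¹⁵ and let γ be an analytic arc in F⁻¹(0) through 0 along which Whitney's condition (b^π) fails. Then, with ν the vanishing order at s = 0 along γ, the valuations satisfy: ν(x) > ν(y) = ν(z) > ν(t), ν(x) + ν(t) = ν(y) + ν(z), and 4ν(x) = ν(t) + 6ν(y). Consequently ν(x) : ν(y) : ν(z) : ν(t) = 8 : 5 : 5 : 2. -/
open Filter Topology

set_option maxHeartbeats 2000000

/-- `f` has vanishing order exactly `k` at `0`: `f(s) = s^k·u(s)` with `u`
analytic at `0` and `u(0) ≠ 0`. -/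
def HasVanishingOrder (f : ℂ → ℂ) (k : ℕ) : Prop :=
  ∃ u : ℂ → ℂ, AnalyticAt ℂ u 0 ∧ u 0 ≠ 0 ∧ ∀ᶠ s in nhds (0 : ℂ), f s = s ^ k * u s

/-- Core comparison: if `f` has exact vanishing order `k` and `f = s^m·w`
with `w` analytic, then `m ≤ k`. -/
theorem hvo_key {f : ℂ → ℂ} {k : ℕ} (h : HasVanishingOrder f k)
    {w : ℂ → ℂ} {m : ℕ} (hw : AnalyticAt ℂ w 0)
    (heq : ∀ᶠ s in nhds (0:ℂ), f s = s ^ m * w s) : m ≤ k := by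
  obtain ⟨u, hu, hu0, hf⟩ := h
  by_contra hlt
  push_neg at hlt
  have hev : (fun s : ℂ => s ^ (m - k) * w s) =ᶠ[𝓝[≠] (0:ℂ)] u := by
    filter_upwards [nhdsWithin_le_nhds hf, nhdsWithin_le_nhds heq,
      self_mem_nhdsWithin] with s h1 h2 hs
    have hs0 : (s:ℂ) ^ k ≠ 0 := pow_ne_zero _ hs
    have hkm : k + (m - k) = m := by omega
    have : s ^ k * (s ^ (m-k) * w s) = s ^ k * u s := by
      rw [← h1, h2, ← mul_assoc, ← pow_add, hkm]
    exact (mul_left_cancel₀ hs0 this)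
  have t1 : Tendsto u (𝓝[≠] (0:ℂ)) (𝓝 (u 0)) :=
    hu.continuousAt.continuousWithinAt.tendsto
  have t2 : Tendsto (fun s : ℂ => s ^ (m-k) * w s) (𝓝[≠] (0:ℂ))
      (𝓝 ((0:ℂ) ^ (m-k) * w 0)) :=
    ((continuous_pow (m-k)).continuousAt.continuousWithinAt.mul
      hw.continuousAt.continuousWithinAt).tendsto
  have : u 0 = (0:ℂ) ^ (m-k) * w 0 := tendsto_nhds_unique t1 (t2.congr' hev)
  rw [zero_pow (by omega : m - k ≠ 0), zero_mul] at this
  exact hu0 this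

theorem hvo_unique {f : ℂ → ℂ} {k k' : ℕ}
    (h : HasVanishingOrder f k) (h' : HasVanishingOrder f k') : k = k' := by
  obtain ⟨u, hu, hu0, hf⟩ := h
  obtain ⟨u', hu', hu0', hf'⟩ := h'
  exact le_antisymm (hvo_key ⟨u', hu', hu0', hf'⟩ hu hf)
    (hvo_key ⟨u, hu, hu0, hf⟩ hu' hf')

theorem hvo_mul {f g : ℂ → ℂ} {p q : ℕ}
    (hf : HasVanishingOrder f p) (hg : HasVanishingOrder g q) :
    HasVanishingOrder (fun s => f s * g s) (p + q) := by
  obtain ⟨u, hu, hu0, hfe⟩ := hf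
  obtain ⟨v, hv, hv0, hge⟩ := hg
  refine ⟨fun s => u s * v s, hu.mul hv, mul_ne_zero hu0 hv0, ?_⟩
  filter_upwards [hfe, hge] with s h1 h2
  rw [h1, h2, pow_add]; ring

theorem hvo_pow {f : ℂ → ℂ} {p : ℕ} (hf : HasVanishingOrder f p) (n : ℕ) :
    HasVanishingOrder (fun s => f s ^ n) (n * p) := by
  induction n with
  | zero => exact ⟨fun _ => 1, analyticAt_const, one_ne_zero, by simp⟩
  | succ n ih =>
      have h2 := hvo_mul ih hf
      obtain ⟨u, hu, hu0, he⟩ := h2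
      refine ⟨u, hu, hu0, ?_⟩
      have hord : n * p + p = (n+1) * p := by ring
      rw [hord] at he
      filter_upwards [he] with s hs
      rw [← hs]; ring

theorem hvo_cmul {f : ℂ → ℂ} {p : ℕ} (c : ℂ) (hc : c ≠ 0)
    (hf : HasVanishingOrder f p) : HasVanishingOrder (fun s => c * f s) p := by
  obtain ⟨u, hu, hu0, hfe⟩ := hf
  refine ⟨fun s => c * u s, analyticAt_const.mul hu, mul_ne_zero hc hu0, ?_⟩
  filter_upwards [hfe] with s h1
  rw [h1]; ring

theorem hvo_add_lt {f g : ℂ → ℂ} {p q : ℕ}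
    (hf : HasVanishingOrder f p) (hg : HasVanishingOrder g q) (h : p < q) :
    HasVanishingOrder (fun s => f s + g s) p := by
  obtain ⟨u, hu, hu0, hfe⟩ := hf
  obtain ⟨v, hv, hv0, hge⟩ := hg
  refine ⟨fun s => u s + s ^ (q - p) * v s,
    hu.add ((analyticAt_id.pow _).mul hv), ?_, ?_⟩
  · simpa [zero_pow (by omega : q - p ≠ 0)] using hu0
  · filter_upwards [hfe, hge] with s h1 h2
    have hsq : (s:ℂ) ^ q = s ^ p * s ^ (q - p) := by
      rw [← pow_add]; congr 1; omega
    rw [h1, h2, hsq]; ring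

theorem hvo_ge_min2 {f g : ℂ → ℂ} {p q r : ℕ}
    (hf : HasVanishingOrder f p) (hg : HasVanishingOrder g q)
    (hfg : HasVanishingOrder (fun s => f s + g s) r) : min p q ≤ r := by
  obtain ⟨u, hu, hu0, hfe⟩ := hf
  obtain ⟨v, hv, hv0, hge⟩ := hg
  refine hvo_key hfg (w := fun s => s ^ (p - min p q) * u s + s ^ (q - min p q) * v s)
    (((analyticAt_id.pow _).mul hu).add ((analyticAt_id.pow _).mul hv)) ?_
  filter_upwards [hfe, hge] with s h1 h2
  have hsp : (s:ℂ) ^ p = s ^ min p q * s ^ (p - min p q) := by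
    rw [← pow_add]; congr 1; omega
  have hsq : (s:ℂ) ^ q = s ^ min p q * s ^ (q - min p q) := by
    rw [← pow_add]; congr 1; omega
  rw [h1, h2, hsp, hsq]; ring

theorem hvo_add_ne {f g : ℂ → ℂ} {p q r : ℕ}
    (hf : HasVanishingOrder f p) (hg : HasVanishingOrder g q)
    (hfg : HasVanishingOrder (fun s => f s + g s) r) (hne : p ≠ q) :
    r = min p q := by
  rcases lt_or_gt_of_ne hne with h|h
  · have := hvo_add_lt hf hg h
    have hr := hvo_unique hfg this
    omega
  · have h2 : HasVanishingOrder (fun s => f s + g s) q := by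
      obtain ⟨u, hu, hu0, hfe⟩ := hvo_add_lt hg hf h
      exact ⟨u, hu, hu0, by filter_upwards [hfe] with s hs; rw [← hs]; ring⟩
    have hr := hvo_unique hfg h2
    omega

/-- If `f₁+f₂+f₃+f₄ = 0` near `0` and each `fᵢ` has exact vanishing order
`kᵢ`, then `min k₂ (min k₃ k₄) ≤ k₁`. -/
theorem sum4 {f1 f2 f3 f4 : ℂ → ℂ} {k1 k2 k3 k4 : ℕ}
    (h1 : HasVanishingOrder f1 k1) (h2 : HasVanishingOrder f2 k2)
    (h3 : HasVanishingOrder f3 k3) (h4 : HasVanishingOrder f4 k4)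
    (hz : ∀ᶠ s in nhds (0:ℂ), f1 s + f2 s + f3 s + f4 s = 0) :
    min k2 (min k3 k4) ≤ k1 := by
  obtain ⟨u2, hu2, hu02, he2⟩ := h2
  obtain ⟨u3, hu3, hu03, he3⟩ := h3
  obtain ⟨u4, hu4, hu04, he4⟩ := h4
  set M := min k2 (min k3 k4) with hM
  refine hvo_key h1
    (w := fun s => -(s ^ (k2 - M) * u2 s + s ^ (k3 - M) * u3 s + s ^ (k4 - M) * u4 s))
    ?_ ?_
  · exact ((((analyticAt_id.pow _).mul hu2).add ((analyticAt_id.pow _).mul hu3)).add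
      ((analyticAt_id.pow _).mul hu4)).neg
  · filter_upwards [hz, he2, he3, he4] with s h0 e2 e3 e4
    have hs2 : (s:ℂ) ^ k2 = s ^ M * s ^ (k2 - M) := by rw [← pow_add]; congr 1; omega
    have hs3 : (s:ℂ) ^ k3 = s ^ M * s ^ (k3 - M) := by rw [← pow_add]; congr 1; omega
    have hs4 : (s:ℂ) ^ k4 = s ^ M * s ^ (k4 - M) := by rw [← pow_add]; congr 1; omega
    have h5 : f1 s = -(f2 s + f3 s + f4 s) := by linear_combination h0
    rw [h5, e2, e3, e4, hs2, hs3, hs4]; ring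

/-- Three-term version. -/
theorem sum3 {f1 f2 f3 : ℂ → ℂ} {k1 k2 k3 : ℕ}
    (h1 : HasVanishingOrder f1 k1) (h2 : HasVanishingOrder f2 k2)
    (h3 : HasVanishingOrder f3 k3)
    (hz : ∀ᶠ s in nhds (0:ℂ), f1 s + f2 s + f3 s = 0) :
    min k2 k3 ≤ k1 := by
  obtain ⟨u2, hu2, hu02, he2⟩ := h2
  obtain ⟨u3, hu3, hu03, he3⟩ := h3
  set M := min k2 k3 with hM
  refine hvo_key h1
    (w := fun s => -(s ^ (k2 - M) * u2 s + s ^ (k3 - M) * u3 s)) ?_ ?_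
  · exact (((analyticAt_id.pow _).mul hu2).add ((analyticAt_id.pow _).mul hu3)).neg
  · filter_upwards [hz, he2, he3] with s h0 e2 e3
    have hs2 : (s:ℂ) ^ k2 = s ^ M * s ^ (k2 - M) := by rw [← pow_add]; congr 1; omega
    have hs3 : (s:ℂ) ^ k3 = s ^ M * s ^ (k3 - M) := by rw [← pow_add]; congr 1; omega
    have h5 : f1 s = -(f2 s + f3 s) := by linear_combination h0
    rw [h5, e2, e3, hs2, hs3]; ring

set_option maxHeartbeats 2000000 in
theorem arith_core (a b c d vdx vdy vdz : ℕ)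
    (h1a : 1 ≤ a) (h1b : 1 ≤ b) (h1c : 1 ≤ c) (h1d : 1 ≤ d)
    (hF1 : min (a+d+6*b) (min (7*b+c) (15*c)) ≤ 5*a)
    (hF2 : min (5*a) (min (7*b+c) (15*c)) ≤ a+d+6*b)
    (hF3 : min (5*a) (min (a+d+6*b) (15*c)) ≤ 7*b+c)
    (hF4 : min (5*a) (min (a+d+6*b) (7*b+c)) ≤ 15*c)
    (hE1 : min (b+vdy) (c+vdz) ≤ a+vdx)
    (hE2 : min (c+vdz) (a+vdx) ≤ b+vdy)
    (hE3 : min (a+vdx) (b+vdy) ≤ c+vdz)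
    (Hx : vdx = min (4*a) (d+6*b) ∨ 4*a = d+6*b)
    (Hy : vdy = min (d+a+5*b) (6*b+c) ∨ d+a+5*b = 6*b+c)
    (Hz : vdz = min (7*b) (14*c) ∨ 7*b = 14*c)
    (hdx1 : min (4*a) (d+6*b) ≤ vdx)
    (hdy1 : min (d+a+5*b) (6*b+c) ≤ vdy)
    (hdz1 : min (7*b) (14*c) ≤ vdz)
    (hfail : d + (a + 6*b) ≤ min a (min b c) + min vdx (min vdy vdz)) :
    a > b ∧ b = c ∧ c > d ∧ a + d = b + c ∧ 4*a = d + 6*b ∧ 5*a = 8*b := by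
  rcases Hx with hx|hx <;> rcases Hy with hy|hy <;> rcases Hz with hz|hz <;> omega

/-- For `F(x,y,z,t) = x⁵ + txy⁶ + y⁷z + z¹⁵`, let `γ = (x,y,z,t)` be an
analytic arc in `F⁻¹(0)` through `0` along which Whitney's condition `(b^π)`
fails, i.e. `ν(t) + ν(∂F/∂t∘γ) ≤ min(ν(x),ν(y),ν(z)) + ν(J_X F∘γ)` where
`∂F/∂t = xy⁶`.  Then `ν(x) > ν(y) = ν(z) > ν(t)`,
`ν(x) + ν(t) = ν(y) + ν(z)` and `4ν(x) = ν(t) + 6ν(y)`; consequently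
`ν(x) : ν(y) : ν(z) : ν(t) = 8 : 5 : 5 : 2`. -/
theorem briancon_speder_bpi_failure_valuations
    (x y z t : ℂ → ℂ)
    (hxa : AnalyticAt ℂ x 0) (hya : AnalyticAt ℂ y 0)
    (hza : AnalyticAt ℂ z 0) (hta : AnalyticAt ℂ t 0)
    (hFγ : ∀ᶠ s in nhds (0 : ℂ),
      (x s) ^ 5 + t s * x s * (y s) ^ 6 + (y s) ^ 7 * z s + (z s) ^ 15 = 0)
    (νx νy νz νt νdt νdx νdy νdz : ℕ)
    (hνx : HasVanishingOrder x νx) (hνy : HasVanishingOrder y νy)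
    (hνz : HasVanishingOrder z νz) (hνt : HasVanishingOrder t νt)
    (h1x : 1 ≤ νx) (h1y : 1 ≤ νy) (h1z : 1 ≤ νz) (h1t : 1 ≤ νt)
    (hνdt : HasVanishingOrder (fun s => x s * (y s) ^ 6) νdt)
    (hνdx : HasVanishingOrder (fun s => 5 * (x s) ^ 4 + t s * (y s) ^ 6) νdx)
    (hνdy : HasVanishingOrder (fun s => 6 * t s * x s * (y s) ^ 5 + 7 * (y s) ^ 6 * z s) νdy)
    (hνdz : HasVanishingOrder (fun s => (y s) ^ 7 + 15 * (z s) ^ 14) νdz)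
    (hfail : νt + νdt ≤ min νx (min νy νz) + min νdx (min νdy νdz)) :
    νx > νy ∧ νy = νz ∧ νz > νt ∧
    νx + νt = νy + νz ∧ 4 * νx = νt + 6 * νy ∧
    ∃ m : ℕ, νx = 8 * m ∧ νy = 5 * m ∧ νz = 5 * m ∧ νt = 2 * m := by
  -- the four monomials of F along γ
  have m1 : HasVanishingOrder (fun s => x s ^ 5) (5 * νx) := hvo_pow hνx 5
  have m2 : HasVanishingOrder (fun s => t s * x s * y s ^ 6) (νt + νx + 6 * νy) :=
    hvo_mul (hvo_mul hνt hνx) (hvo_pow hνy 6)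
  have m3 : HasVanishingOrder (fun s => y s ^ 7 * z s) (7 * νy + νz) :=
    hvo_mul (hvo_pow hνy 7) hνz
  have m4 : HasVanishingOrder (fun s => z s ^ 15) (15 * νz) := hvo_pow hνz 15
  -- νdt
  have e0 : νdt = νx + 6 * νy := hvo_unique hνdt (hvo_mul hνx (hvo_pow hνy 6))
  -- F : minimum attained at least twice
  have hF1 := sum4 m1 m2 m3 m4 hFγ
  have hF2 := sum4 m2 m3 m4 m1 (by filter_upwards [hFγ] with s hs; linear_combination hs)
  have hF3 := sum4 m3 m4 m1 m2 (by filter_upwards [hFγ] with s hs; linear_combination hs)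
  have hF4 := sum4 m4 m1 m2 m3 (by filter_upwards [hFγ] with s hs; linear_combination hs)
  -- Euler relation : 3x·Fx + 2y·Fy + z·Fz = 15F = 0 along γ
  have g1 : HasVanishingOrder
      (fun s => (3 * x s) * (5 * (x s) ^ 4 + t s * (y s) ^ 6)) (νx + νdx) :=
    hvo_mul (hvo_cmul 3 (by norm_num) hνx) hνdx
  have g2 : HasVanishingOrder
      (fun s => (2 * y s) * (6 * t s * x s * (y s) ^ 5 + 7 * (y s) ^ 6 * z s)) (νy + νdy) :=
    hvo_mul (hvo_cmul 2 (by norm_num) hνy) hνdy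
  have g3 : HasVanishingOrder
      (fun s => z s * ((y s) ^ 7 + 15 * (z s) ^ 14)) (νz + νdz) :=
    hvo_mul hνz hνdz
  have heuler : ∀ᶠ s in nhds (0:ℂ),
      (3 * x s) * (5 * (x s) ^ 4 + t s * (y s) ^ 6)
      + (2 * y s) * (6 * t s * x s * (y s) ^ 5 + 7 * (y s) ^ 6 * z s)
      + z s * ((y s) ^ 7 + 15 * (z s) ^ 14) = 0 := by
    filter_upwards [hFγ] with s hs; linear_combination 15 * hs
  have hE1 := sum3 g1 g2 g3 heuler
  have hE2 := sum3 g2 g3 g1 (by filter_upwards [heuler] with s hs; linear_combination hs)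
  have hE3 := sum3 g3 g1 g2 (by filter_upwards [heuler] with s hs; linear_combination hs)
  -- orders of the two monomials in each partial derivative
  have a1 : HasVanishingOrder (fun s => 5 * (x s) ^ 4) (4 * νx) :=
    hvo_cmul 5 (by norm_num) (hvo_pow hνx 4)
  have b1 : HasVanishingOrder (fun s => t s * (y s) ^ 6) (νt + 6 * νy) :=
    hvo_mul hνt (hvo_pow hνy 6)
  have a2 : HasVanishingOrder (fun s => 6 * t s * x s * (y s) ^ 5) (νt + νx + 5 * νy) := by
    obtain ⟨u, hu, hu0, he⟩ := hvo_mul (hvo_mul (hvo_cmul 6 (by norm_num) hνt) hνx) (hvo_pow hνy 5)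
    exact ⟨u, hu, hu0, by filter_upwards [he] with s hs; rw [← hs]⟩
  have b2 : HasVanishingOrder (fun s => 7 * (y s) ^ 6 * z s) (6 * νy + νz) := by
    obtain ⟨u, hu, hu0, he⟩ := hvo_mul (hvo_cmul 7 (by norm_num) (hvo_pow hνy 6)) hνz
    exact ⟨u, hu, hu0, by filter_upwards [he] with s hs; rw [← hs]⟩
  have a3 : HasVanishingOrder (fun s => (y s) ^ 7) (7 * νy) := hvo_pow hνy 7
  have b3 : HasVanishingOrder (fun s => 15 * (z s) ^ 14) (14 * νz) :=
    hvo_cmul 15 (by norm_num) (hvo_pow hνz 14)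
  have hdx1 : min (4 * νx) (νt + 6 * νy) ≤ νdx := hvo_ge_min2 a1 b1 hνdx
  have hdy1 : min (νt + νx + 5 * νy) (6 * νy + νz) ≤ νdy := hvo_ge_min2 a2 b2 hνdy
  have hdz1 : min (7 * νy) (14 * νz) ≤ νdz := hvo_ge_min2 a3 b3 hνdz
  have Hx : νdx = min (4 * νx) (νt + 6 * νy) ∨ 4 * νx = νt + 6 * νy := by
    rcases eq_or_ne (4 * νx) (νt + 6 * νy) with h|h
    exacts [Or.inr h, Or.inl (hvo_add_ne a1 b1 hνdx h)]
  have Hy : νdy = min (νt + νx + 5 * νy) (6 * νy + νz) ∨ νt + νx + 5 * νy = 6 * νy + νz := by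
    rcases eq_or_ne (νt + νx + 5 * νy) (6 * νy + νz) with h|h
    exacts [Or.inr h, Or.inl (hvo_add_ne a2 b2 hνdy h)]
  have Hz : νdz = min (7 * νy) (14 * νz) ∨ 7 * νy = 14 * νz := by
    rcases eq_or_ne (7 * νy) (14 * νz) with h|h
    exacts [Or.inr h, Or.inl (hvo_add_ne a3 b3 hνdz h)]
  rw [e0] at hfail
  have key : νx > νy ∧ νy = νz ∧ νz > νt ∧ νx + νt = νy + νz ∧
      4 * νx = νt + 6 * νy ∧ 5 * νx = 8 * νy := by
    refine arith_core νx νy νz νt νdx νdy νdz h1x h1y h1z h1t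
      (by omega) (by omega) (by omega) (by omega)
      hE1 hE2 hE3 Hx Hy Hz hdx1 hdy1 hdz1 (by omega)
  obtain ⟨k1, k2, k3, k4, k5, k6⟩ := key
  exact ⟨k1, k2, k3, k4, k5, ⟨2 * νx - 3 * νy, by omega, by omega, by omega, by omega⟩⟩
end

section
/- Let V = {(x,y,t) ∈ ℝ³ : y⁶ = t⁶x² + x⁶}, Y the t-axis, X = V \ Y. Then the pair (X,Y) fails Whitney's condition (b) at the origin: there is a sequence of points pₙ ∈ X converging to 0 such that the secant lines from pₙ to its projection (0,0,tₙ) on Y and the tangent planes T_{pₙ}X converge, but the limit line is not contained in the limit plane. -/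
open Filter RealInnerProductSpace InnerProductSpace

noncomputable def GE (i : Fin 3) : EuclideanSpace ℝ (Fin 3) := EuclideanSpace.single i (1:ℝ)

noncomputable def Gvec (p : EuclideanSpace ℝ (Fin 3)) : EuclideanSpace ℝ (Fin 3) :=
  (-(p 2 ^ 6 * (2 * p 0) + 6 * p 0 ^ 5)) • GE 0 + (6 * p 1 ^ 5) • GE 1
    + (-(6 * p 2 ^ 5 * p 0 ^ 2)) • GE 2

lemma hasGradient (g : EuclideanSpace ℝ (Fin 3) → ℝ)
    (hg : ∀ p, g p = p 1 ^ 6 - p 2 ^ 6 * p 0 ^ 2 - p 0 ^ 6)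
    (p : EuclideanSpace ℝ (Fin 3)) : HasGradientAt g (Gvec p) p := by
  have hproj : ∀ i : Fin 3, HasFDerivAt (fun q : EuclideanSpace ℝ (Fin 3) => q i)
      (EuclideanSpace.proj i : EuclideanSpace ℝ (Fin 3) →L[ℝ] ℝ) p := by
    intro i
    have h := (EuclideanSpace.proj i (𝕜 := ℝ)).hasFDerivAt (x := p)
    have : ⇑(EuclideanSpace.proj i (𝕜 := ℝ)) = fun q : EuclideanSpace ℝ (Fin 3) => q i := by
      funext q; simp
    rwa [this] at h
  have h1 : HasFDerivAt (fun q : EuclideanSpace ℝ (Fin 3) => q 1 ^ 6)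
      ((6 * p 1 ^ 5) • (EuclideanSpace.proj 1 : EuclideanSpace ℝ (Fin 3) →L[ℝ] ℝ)) p := by
    have h := (hasDerivAt_pow 6 (p 1)).comp_hasFDerivAt p (hproj 1)
    simp only [Function.comp_def] at h
    rw [show (6:ℝ) * p 1 ^ 5 = ((6:ℕ):ℝ) * p 1 ^ (6 - 1) by norm_num]
    exact h
  have h0 : HasFDerivAt (fun q : EuclideanSpace ℝ (Fin 3) => q 0 ^ 6)
      ((6 * p 0 ^ 5) • (EuclideanSpace.proj 0 : EuclideanSpace ℝ (Fin 3) →L[ℝ] ℝ)) p := by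
    have h := (hasDerivAt_pow 6 (p 0)).comp_hasFDerivAt p (hproj 0)
    simp only [Function.comp_def] at h
    rw [show (6:ℝ) * p 0 ^ 5 = ((6:ℕ):ℝ) * p 0 ^ (6 - 1) by norm_num]
    exact h
  have h2a : HasFDerivAt (fun q : EuclideanSpace ℝ (Fin 3) => q 2 ^ 6)
      ((6 * p 2 ^ 5) • (EuclideanSpace.proj 2 : EuclideanSpace ℝ (Fin 3) →L[ℝ] ℝ)) p := by
    have h := (hasDerivAt_pow 6 (p 2)).comp_hasFDerivAt p (hproj 2)
    simp only [Function.comp_def] at h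
    rw [show (6:ℝ) * p 2 ^ 5 = ((6:ℕ):ℝ) * p 2 ^ (6 - 1) by norm_num]
    exact h
  have h2b : HasFDerivAt (fun q : EuclideanSpace ℝ (Fin 3) => q 0 ^ 2)
      ((2 * p 0) • (EuclideanSpace.proj 0 : EuclideanSpace ℝ (Fin 3) →L[ℝ] ℝ)) p := by
    have h := (hasDerivAt_pow 2 (p 0)).comp_hasFDerivAt p (hproj 0)
    simp only [Function.comp_def] at h
    rw [show (2:ℝ) * p 0 = ((2:ℕ):ℝ) * p 0 ^ (2 - 1) by norm_num]
    exact h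
  have h2 := h2a.mul h2b
  have hF := (h1.sub h2).sub h0
  have hgeq : g = fun q : EuclideanSpace ℝ (Fin 3) =>
      q 1 ^ 6 - q 2 ^ 6 * q 0 ^ 2 - q 0 ^ 6 := funext hg
  rw [hgeq]
  rw [hasGradientAt_iff_hasFDerivAt]
  refine hF.congr_fderiv ?_
  ext v
  simp [Gvec, GE, toDual_apply_apply, real_inner_smul_left, inner_add_left,
    EuclideanSpace.inner_single_left]
  ring

lemma normalize_pos_smul {E : Type*} [NormedAddCommGroup E] [NormedSpace ℝ E]
    (a : ℝ) (ha : 0 < a) (v : E) : ‖a • v‖⁻¹ • (a • v) = ‖v‖⁻¹ • v := by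
  rcases eq_or_ne v 0 with rfl | hv
  · simp
  · rw [norm_smul, Real.norm_eq_abs, abs_of_pos ha, mul_inv, smul_smul]
    congr 1
    calc a⁻¹ * ‖v‖⁻¹ * a = ‖v‖⁻¹ * (a⁻¹ * a) := by ring
      _ = ‖v‖⁻¹ := by rw [inv_mul_cancel₀ ha.ne', mul_one]

/-- Let `V = {(x,y,t) ∈ ℝ³ : y⁶ = t⁶x² + x⁶}`, `Y` the `t`-axis and
`X = V \\ Y`.  The pair `(X,Y)` fails Whitney's condition (b) at the origin:
there is a sequence `pₙ ∈ X` tending to `0` such that the secant directions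
from `pₙ` to its projection `(0,0,tₙ)` on `Y` converge to a unit vector `ℓ`,
the unit normals of `X` at `pₙ` (directing the tangent planes
`T_{pₙ}X = N^⊥`, where `N` is the normalised gradient of
`g(x,y,t) = y⁶ - t⁶x² - x⁶`) converge to a unit vector `N`, and `⟪ℓ,N⟫ ≠ 0`,
so the limit secant line is not contained in the limit tangent plane. -/
theorem weakly_whitney_example_fails_b
    (V Y X : Set (EuclideanSpace ℝ (Fin 3)))
    (hV : V = {p | p 1 ^ 6 = p 2 ^ 6 * p 0 ^ 2 + p 0 ^ 6})
    (hY : Y = {p | p 0 = 0 ∧ p 1 = 0})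
    (hX : X = V \ Y)
    (g : EuclideanSpace ℝ (Fin 3) → ℝ)
    (hg : ∀ p, g p = p 1 ^ 6 - p 2 ^ 6 * p 0 ^ 2 - p 0 ^ 6) :
    ∃ p : ℕ → EuclideanSpace ℝ (Fin 3), ∃ q : ℕ → EuclideanSpace ℝ (Fin 3),
      (∀ n, p n ∈ X) ∧ (∀ n, q n ∈ Y) ∧
      (∀ n, q n = WithLp.toLp 2 (fun i => if i = 2 then p n 2 else 0)) ∧
      Tendsto p atTop (nhds 0) ∧
      (∀ n, gradient g (p n) ≠ 0) ∧
      ∃ ℓ N : EuclideanSpace ℝ (Fin 3),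
        ‖ℓ‖ = 1 ∧ ‖N‖ = 1 ∧
        Tendsto (fun n => ‖p n - q n‖⁻¹ • (p n - q n)) atTop (nhds ℓ) ∧
        Tendsto (fun n => ‖gradient g (p n)‖⁻¹ • gradient g (p n)) atTop (nhds N) ∧
        ⟪ℓ, N⟫ ≠ 0 := by
  classical
  set c : ℝ := (2:ℝ) ^ ((6:ℝ)⁻¹) with hcdef
  have hc : 0 < c := Real.rpow_pos_of_pos two_pos _
  have hc6 : c ^ 6 = 2 := by
    rw [hcdef, ← Real.rpow_natCast ((2:ℝ) ^ ((6:ℝ)⁻¹)) 6, ← Real.rpow_mul (by norm_num)]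
    norm_num
  set u : ℕ → ℝ := fun n => ((n : ℝ) + 1)⁻¹ with hudef
  have hu : ∀ n, 0 < u n := fun n => by positivity
  have hu0 : Tendsto u atTop (nhds 0) := by
    simpa [hudef, one_div] using tendsto_one_div_add_atTop_nhds_zero_nat (𝕜 := ℝ)
  set p : ℕ → EuclideanSpace ℝ (Fin 3) := fun n =>
    (u n ^ 3) • GE 0 + (c * u n ^ 3) • GE 1 + (u n ^ 2) • GE 2 with hpdef
  set q : ℕ → EuclideanSpace ℝ (Fin 3) := fun n => (u n ^ 2) • GE 2 with hqdef
  have hp0 : ∀ n, p n 0 = u n ^ 3 := by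
    intro n; simp [hpdef, GE, EuclideanSpace.single_apply]
  have hp1 : ∀ n, p n 1 = c * u n ^ 3 := by
    intro n; simp [hpdef, GE, EuclideanSpace.single_apply]
  have hp2 : ∀ n, p n 2 = u n ^ 2 := by
    intro n; simp [hpdef, GE, EuclideanSpace.single_apply]
  refine ⟨p, q, ?_, ?_, ?_, ?_, ?_, ?_⟩
  · -- p n ∈ X
    intro n
    rw [hX]
    constructor
    · rw [hV]
      show p n 1 ^ 6 = p n 2 ^ 6 * p n 0 ^ 2 + p n 0 ^ 6
      rw [hp0, hp1, hp2, mul_pow, hc6]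
      ring
    · rw [hY]
      intro h
      have h0 := h.1
      rw [hp0] at h0
      exact (pow_ne_zero 3 (hu n).ne') h0
  · -- q n ∈ Y
    intro n
    rw [hY]
    constructor <;> simp [hqdef, GE, EuclideanSpace.single_apply]
  · -- q n = proj
    intro n
    ext i
    fin_cases i <;>
      simp [hqdef, hpdef, GE, EuclideanSpace.single_apply]
  · -- Tendsto p 0
    have h3 : Tendsto (fun n => u n ^ 3) atTop (nhds 0) := by
      simpa using hu0.pow 3
    have h2 : Tendsto (fun n => u n ^ 2) atTop (nhds 0) := by
      simpa using hu0.pow 2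
    have := ((h3.smul_const (GE 0)).add ((h3.const_mul c).smul_const (GE 1))).add
      (h2.smul_const (GE 2))
    simpa [hpdef, mul_comm] using this
  · -- gradient ≠ 0
    intro n
    rw [(hasGradient g hg (p n)).gradient]
    intro h
    have h0 : Gvec (p n) 0 = 0 := by rw [h]; rfl
    rw [show Gvec (p n) 0 = -(p n 2 ^ 6 * (2 * p n 0) + 6 * p n 0 ^ 5) by
      simp [Gvec, GE, EuclideanSpace.single_apply]] at h0
    rw [hp0, hp2] at h0
    nlinarith [pow_pos (hu n) 15, pow_pos (hu n) 12, pow_pos (hu n) 3, pow_pos (hu n) 5]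
  · -- the limits
    set v : EuclideanSpace ℝ (Fin 3) := GE 0 + c • GE 1 with hvdef
    set wl : EuclideanSpace ℝ (Fin 3) := (-8 : ℝ) • GE 0 + (6 * c ^ 5) • GE 1 with hwldef
    set w : ℕ → EuclideanSpace ℝ (Fin 3) := fun n => wl + (-6 * u n) • GE 2 with hwdef
    have hv_ne : v ≠ 0 := by
      intro h
      have : v 0 = 0 := by rw [h]; rfl
      rw [show v 0 = 1 by simp [hvdef, GE, EuclideanSpace.single_apply]] at this
      norm_num at this
    have hwl_ne : wl ≠ 0 := by
      intro h
      have : wl 0 = 0 := by rw [h]; rfl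
      rw [show wl 0 = -8 by simp [hwldef, GE, EuclideanSpace.single_apply]] at this
      norm_num at this
    have hvn : ‖v‖ ≠ 0 := norm_ne_zero_iff.mpr hv_ne
    have hwln : ‖wl‖ ≠ 0 := norm_ne_zero_iff.mpr hwl_ne
    refine ⟨‖v‖⁻¹ • v, ‖wl‖⁻¹ • wl, norm_smul_inv_norm hv_ne, norm_smul_inv_norm hwl_ne,
      ?_, ?_, ?_⟩
    · -- secants
      have hpq : ∀ n, p n - q n = (u n ^ 3) • v := by
        intro n
        rw [hpdef, hqdef, hvdef]
        module
      have : ∀ n, ‖p n - q n‖⁻¹ • (p n - q n) = ‖v‖⁻¹ • v := by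
        intro n
        rw [hpq n]
        exact normalize_pos_smul _ (pow_pos (hu n) 3) _
      rw [funext this]
      exact tendsto_const_nhds
    · -- normals
      have hGw : ∀ n, Gvec (p n) = (u n ^ 15) • w n := by
        intro n
        rw [Gvec, hp0, hp1, hp2, hwdef, hwldef]
        module
      have hnorm : ∀ n, ‖gradient g (p n)‖⁻¹ • gradient g (p n) = ‖w n‖⁻¹ • w n := by
        intro n
        rw [(hasGradient g hg (p n)).gradient, hGw n]
        exact normalize_pos_smul _ (pow_pos (hu n) 15) _
      have hw : Tendsto w atTop (nhds wl) := by
        have := (tendsto_const_nhds (x := wl) (f := atTop (α := ℕ))).add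
          (((hu0.const_mul (-6)).smul_const (GE 2)))
        simpa [hwdef] using this
      have := ((hw.norm.inv₀ hwln).smul hw)
      rw [funext hnorm]
      exact this
    · -- inner product nonzero
      have hvw : ⟪v, wl⟫ = 4 := by
        rw [hvdef, hwldef]
        simp [inner_add_left, inner_add_right, real_inner_smul_left, real_inner_smul_right,
          GE, EuclideanSpace.inner_single_left, EuclideanSpace.single_apply]
        linear_combination (6:ℝ) * hc6
      rw [real_inner_smul_left, real_inner_smul_right, hvw]
      intro h
      rcases mul_eq_zero.mp h with h | h
      · exact inv_ne_zero hvn h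
      rcases mul_eq_zero.mp h with h | h
      · exact inv_ne_zero hwln h
      · norm_num at h
end

section
/- Suppose submanifolds X, Y of ℝⁿ with y ∈ Y ∩ closure(X) satisfy condition (a) at y (limits of tangent planes of X contain T_yY) and condition (δ^π) at y with constant δ < 1 (for the projection π of a tubular neighborhood of Y: limits ℓ of normalized secants x - π(x) and limits τ of T_xX satisfy sin θ(ℓ, τ) ≤ δ). Then (X,Y) satisfies condition (δ) at y with the same constant δ: for all sequences xᵢ ∈ X, yᵢ ∈ Y converging to y with secant directions converging to ℓ and tangent planes converging to τ, sin θ(ℓ, τ) ≤ δ. -/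
open Filter
open Asymptotics RealInnerProductSpace

noncomputable section

variable {n : ℕ}

/-- Sine of the angle between a vector `v` and a subspace `τ`:
`sin θ(v,τ) = ‖π_{τ⊥}(v)‖/‖v‖`. -/
def sinAngle (v : EuclideanSpace ℝ (Fin n)) (τ : Submodule ℝ (EuclideanSpace ℝ (Fin n))) : ℝ :=
  ‖v - (Submodule.orthogonalProjection τ v : EuclideanSpace ℝ (Fin n))‖ / ‖v‖

/-- The orthogonal projection onto a subspace, as an endomorphism; convergence
of these operators encodes convergence of the (tangent) planes. -/
def projOp (τ : Submodule ℝ (EuclideanSpace ℝ (Fin n))) :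
    EuclideanSpace ℝ (Fin n) →L[ℝ] EuclideanSpace ℝ (Fin n) :=
  τ.subtypeL.comp (Submodule.orthogonalProjection τ)

lemma tendsto_inv_smul_of_isLittleO {E F : Type*} [NormedAddCommGroup E]
    [NormedAddCommGroup F] [NormedSpace ℝ F]
    {c : ℕ → E} {g : ℕ → F} (h : g =o[atTop] c) :
    Tendsto (fun i => ‖c i‖⁻¹ • g i) atTop (nhds 0) := by
  rw [NormedAddCommGroup.tendsto_nhds_zero]
  intro ε hε
  filter_upwards [h.def (half_pos hε)] with i hi
  rw [norm_smul, norm_inv, norm_norm]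
  rcases eq_or_ne (c i) 0 with h0 | h0
  · have hg : ‖g i‖ = 0 := le_antisymm (by simpa [h0] using hi) (norm_nonneg _)
    simp [h0, hg, hε]
  · have hc : 0 < ‖c i‖ := norm_pos_iff.mpr h0
    calc ‖c i‖⁻¹ * ‖g i‖ ≤ ‖c i‖⁻¹ * (ε / 2 * ‖c i‖) := by
          exact mul_le_mul_of_nonneg_left hi (by positivity)
      _ = ε / 2 := by field_simp
      _ < ε := half_lt_self hε

lemma norm_smul_inv_smul_self {F : Type*} [NormedAddCommGroup F] [NormedSpace ℝ F]
    (a : F) : ‖a‖ • (‖a‖⁻¹ • a) = a := by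
  rcases eq_or_ne a 0 with rfl | h
  · simp
  · rw [smul_smul, mul_inv_cancel₀ (norm_ne_zero_iff.mpr h), one_smul]

lemma projOp_apply {τ : Submodule ℝ (EuclideanSpace ℝ (Fin n))}
    (v : EuclideanSpace ℝ (Fin n)) :
    projOp τ v = (Submodule.orthogonalProjection τ v : EuclideanSpace ℝ (Fin n)) := rfl

lemma sinAngle_eq {v : EuclideanSpace ℝ (Fin n)} {τ : Submodule ℝ (EuclideanSpace ℝ (Fin n))} :
    sinAngle v τ = ‖v - projOp τ v‖ / ‖v‖ := rfl

set_option maxHeartbeats 1000000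

/-- Suppose the submanifolds `X, Y ⊆ ℝⁿ`, with `y ∈ Y ∩ cl(X)`, tangent planes
`TX x` for `x ∈ X` and `T_yY = TY`, and a `C¹` tubular-neighbourhood retraction
`π` onto `Y` (with `dπ_y` the orthogonal projection onto `TY`), satisfy
condition (a) at `y` and condition `(δ^π)` at `y` with constant `δ < 1`.
Then `(X,Y)` satisfies condition `(δ)` at `y` with the same constant `δ`. -/
theorem delta_pi_and_a_implies_delta
    (X Y : Set (EuclideanSpace ℝ (Fin n))) (y : EuclideanSpace ℝ (Fin n))
    (hy : y ∈ Y) (hyc : y ∈ closure X)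
    (TX : EuclideanSpace ℝ (Fin n) → Submodule ℝ (EuclideanSpace ℝ (Fin n)))
    (TY : Submodule ℝ (EuclideanSpace ℝ (Fin n)))
    (π : EuclideanSpace ℝ (Fin n) → EuclideanSpace ℝ (Fin n))
    (hπC : ContDiff ℝ 1 π)
    (hπY : ∀ z, π z ∈ Y)
    (hπr : ∀ z ∈ Y, π z = z)
    (hdπ : fderiv ℝ π y = projOp TY)
    (δ : ℝ) (hδ0 : 0 ≤ δ) (hδ1 : δ < 1)
    -- condition (a) at y :
    (ha : ∀ x : ℕ → EuclideanSpace ℝ (Fin n), (∀ i, x i ∈ X) →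
      Tendsto x atTop (nhds y) →
      ∀ τ : Submodule ℝ (EuclideanSpace ℝ (Fin n)),
        Tendsto (fun i => projOp (TX (x i))) atTop (nhds (projOp τ)) → TY ≤ τ)
    -- condition (δ^π) at y :
    (hδπ : ∀ x : ℕ → EuclideanSpace ℝ (Fin n), (∀ i, x i ∈ X) →
      Tendsto x atTop (nhds y) →
      ∀ (ℓ : EuclideanSpace ℝ (Fin n)) (τ : Submodule ℝ (EuclideanSpace ℝ (Fin n))),
        Tendsto (fun i => ‖x i - π (x i)‖⁻¹ • (x i - π (x i))) atTop (nhds ℓ) →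
        Tendsto (fun i => projOp (TX (x i))) atTop (nhds (projOp τ)) →
        sinAngle ℓ τ ≤ δ) :
    -- condition (δ) at y :
    ∀ (x : ℕ → EuclideanSpace ℝ (Fin n)) (y' : ℕ → EuclideanSpace ℝ (Fin n)),
      (∀ i, x i ∈ X) → (∀ i, y' i ∈ Y) →
      Tendsto x atTop (nhds y) → Tendsto y' atTop (nhds y) →
      ∀ (ℓ : EuclideanSpace ℝ (Fin n)) (τ : Submodule ℝ (EuclideanSpace ℝ (Fin n))),
        Tendsto (fun i => ‖x i - y' i‖⁻¹ • (x i - y' i)) atTop (nhds ℓ) →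
        Tendsto (fun i => projOp (TX (x i))) atTop (nhds (projOp τ)) →
        sinAngle ℓ τ ≤ δ := by
  intro x y' hxX hy'Y hx hy' ℓ τ hℓ hτ
  rcases eq_or_ne ℓ 0 with rfl | hℓ0
  · simpa [sinAngle] using hδ0
  have hTYτ : TY ≤ τ := ha x hxX hx τ hτ
  have hπy : π y = y := hπr y hy
  have hπcont : Continuous π := hπC.continuous
  have hπx : Tendsto (fun i => π (x i)) atTop (nhds y) := by
    have := (hπcont.tendsto y).comp hx
    rwa [hπy] at this
  -- ‖ℓ‖ = 1, eventual nonvanishing of secants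
  have hnorm : Tendsto (fun i => ‖‖x i - y' i‖⁻¹ • (x i - y' i)‖) atTop (nhds ‖ℓ‖) := hℓ.norm
  have hℓpos : (0 : ℝ) < ‖ℓ‖ := norm_pos_iff.mpr hℓ0
  have hev : ∀ᶠ i in atTop, x i - y' i ≠ 0 := by
    filter_upwards [hnorm.eventually (lt_mem_nhds hℓpos)] with i hi
    intro h0
    rw [h0] at hi; simp at hi
  have hℓ1 : ‖ℓ‖ = 1 := by
    have hone : ∀ᶠ i in atTop, ‖‖x i - y' i‖⁻¹ • (x i - y' i)‖ = 1 := by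
      filter_upwards [hev] with i hi
      rw [norm_smul, norm_inv, norm_norm, inv_mul_cancel₀ (norm_ne_zero_iff.mpr hi)]
    exact tendsto_nhds_unique ((tendsto_congr' hone).mp hnorm) tendsto_const_nhds
  -- Lipschitz neighbourhood
  obtain ⟨K, t, ht, hK⟩ := hπC.contDiffAt.exists_lipschitzOnWith (x := y)
  have hxt : ∀ᶠ i in atTop, x i ∈ t := hx.eventually_mem ht
  have hyt : ∀ᶠ i in atTop, y' i ∈ t := hy'.eventually_mem ht
  obtain ⟨N, hN⟩ := eventually_atTop.mp (hev.and (hxt.and hyt))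
  -- shifted sequences
  set x1 : ℕ → EuclideanSpace ℝ (Fin n) := fun i => x (i + N) with hx1def
  set y1 : ℕ → EuclideanSpace ℝ (Fin n) := fun i => y' (i + N) with hy1def
  set a1 : ℕ → EuclideanSpace ℝ (Fin n) := fun i => x1 i - π (x1 i) with ha1def
  set b1 : ℕ → EuclideanSpace ℝ (Fin n) := fun i => π (x1 i) - y1 i with hb1def
  set s1 : ℕ → EuclideanSpace ℝ (Fin n) := fun i => x1 i - y1 i with hs1def
  have hshift : Tendsto (fun i : ℕ => i + N) atTop atTop := tendsto_add_atTop_nat N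
  have hx1 : Tendsto x1 atTop (nhds y) := hx.comp hshift
  have hy1 : Tendsto y1 atTop (nhds y) := hy'.comp hshift
  have hπx1 : Tendsto (fun i => π (x1 i)) atTop (nhds y) := hπx.comp hshift
  have hgood : ∀ i, s1 i ≠ 0 ∧ x1 i ∈ t ∧ y1 i ∈ t := fun i => hN (i + N) (Nat.le_add_left N i)
  have hs1ne : ∀ i, s1 i ≠ 0 := fun i => (hgood i).1
  have hs1pos : ∀ i, (0:ℝ) < ‖s1 i‖ := fun i => norm_pos_iff.mpr (hs1ne i)
  -- bounds
  have hb1le : ∀ i, ‖b1 i‖ ≤ (K : ℝ) * ‖s1 i‖ := by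
    intro i
    have h1 : π (y1 i) = y1 i := hπr _ (hy'Y _)
    have := hK.dist_le_mul (x1 i) (hgood i).2.1 (y1 i) (hgood i).2.2
    rw [h1, dist_eq_norm, dist_eq_norm] at this
    exact this
  have ha1le : ∀ i, ‖a1 i‖ ≤ (1 + (K:ℝ)) * ‖s1 i‖ := by
    intro i
    have : a1 i = s1 i - b1 i := by simp [ha1def, hs1def, hb1def]
    rw [this]
    calc ‖s1 i - b1 i‖ ≤ ‖s1 i‖ + ‖b1 i‖ := norm_sub_le _ _
      _ ≤ ‖s1 i‖ + (K:ℝ) * ‖s1 i‖ := by linarith [hb1le i]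
      _ = (1 + (K:ℝ)) * ‖s1 i‖ := by ring
  -- the bounded sequence in E × E × ℝ × ℝ
  set F : ℕ → (EuclideanSpace ℝ (Fin n)) × (EuclideanSpace ℝ (Fin n)) × ℝ × ℝ :=
    fun i => (‖a1 i‖⁻¹ • a1 i, ‖b1 i‖⁻¹ • b1 i, ‖s1 i‖⁻¹ * ‖a1 i‖, ‖s1 i‖⁻¹ * ‖b1 i‖)
    with hFdef
  have hunit : ∀ (w : EuclideanSpace ℝ (Fin n)), ‖‖w‖⁻¹ • w‖ ≤ 1 := by
    intro w
    rcases eq_or_ne w 0 with rfl | h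
    · simp
    · rw [norm_smul, norm_inv, norm_norm, inv_mul_cancel₀ (norm_ne_zero_iff.mpr h)]
  have hra : ∀ i, ‖s1 i‖⁻¹ * ‖a1 i‖ ≤ 1 + (K:ℝ) := by
    intro i
    rw [inv_mul_le_iff₀ (hs1pos i), mul_comm]
    exact ha1le i
  have hrb : ∀ i, ‖s1 i‖⁻¹ * ‖b1 i‖ ≤ (K:ℝ) := by
    intro i
    rw [inv_mul_le_iff₀ (hs1pos i), mul_comm]
    exact hb1le i
  have hFmem : ∀ i, F i ∈ Metric.closedBall (0 : (EuclideanSpace ℝ (Fin n)) ×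
      (EuclideanSpace ℝ (Fin n)) × ℝ × ℝ) ((K:ℝ) + 2) := by
    intro i
    have hK0 : (0:ℝ) ≤ K := K.coe_nonneg
    have h1 : (0:ℝ) ≤ ‖s1 i‖⁻¹ * ‖a1 i‖ := by positivity
    have h2 : (0:ℝ) ≤ ‖s1 i‖⁻¹ * ‖b1 i‖ := by positivity
    rw [Metric.mem_closedBall, dist_zero_right]
    simp only [hFdef, Prod.norm_def, Real.norm_eq_abs]
    refine max_le ?_ (max_le ?_ (max_le ?_ ?_))
    · linarith [hunit (a1 i)]
    · linarith [hunit (b1 i)]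
    · rw [abs_of_nonneg h1]; linarith [hra i]
    · rw [abs_of_nonneg h2]; linarith [hrb i]
  obtain ⟨L, -, φ, hφ, hF⟩ := tendsto_subseq_of_bounded Metric.isBounded_closedBall hFmem
  obtain ⟨u, v, α, β⟩ := L
  have hφt : Tendsto φ atTop atTop := hφ.tendsto_atTop
  -- component limits
  have hu : Tendsto (fun i => ‖a1 (φ i)‖⁻¹ • a1 (φ i)) atTop (nhds u) :=
    (continuous_fst.tendsto _).comp hF
  have hv : Tendsto (fun i => ‖b1 (φ i)‖⁻¹ • b1 (φ i)) atTop (nhds v) :=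
    (continuous_fst.tendsto _).comp ((continuous_snd.tendsto _).comp hF)
  have hα : Tendsto (fun i => ‖s1 (φ i)‖⁻¹ * ‖a1 (φ i)‖) atTop (nhds α) :=
    (continuous_fst.tendsto _).comp
      ((continuous_snd.tendsto _).comp ((continuous_snd.tendsto _).comp hF))
  have hβ : Tendsto (fun i => ‖s1 (φ i)‖⁻¹ * ‖b1 (φ i)‖) atTop (nhds β) :=
    (continuous_snd.tendsto _).comp
      ((continuous_snd.tendsto _).comp ((continuous_snd.tendsto _).comp hF))
  -- apply (δ^π) to the subsequence: sinAngle u τ ≤ δ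
  have hx2 : Tendsto (fun i => x1 (φ i)) atTop (nhds y) := hx1.comp hφt
  have hτ2 : Tendsto (fun i => projOp (TX (x1 (φ i)))) atTop (nhds (projOp τ)) :=
    (hτ.comp hshift).comp hφt
  have husin : sinAngle u τ ≤ δ :=
    hδπ (fun i => x1 (φ i)) (fun i => hxX _) hx2 u τ hu hτ2
  -- strict differentiability
  have hstrict : HasStrictFDerivAt π (projOp TY) y := by
    have := hπC.contDiffAt.hasStrictFDerivAt (x := y) one_ne_zero
    rwa [hdπ] at this
  -- u is orthogonal to TY
  have hlo1 := hstrict.isLittleO.comp_tendsto (hπx1.prodMk_nhds hx1)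
  have hlo1' : (fun i => projOp TY (a1 i)) =o[atTop] fun i => π (x1 i) - x1 i := by
    refine hlo1.congr' (Eventually.of_forall fun i => ?_) EventuallyEq.rfl
    have h1 : π (π (x1 i)) = π (x1 i) := hπr _ (hπY _)
    simp only [Function.comp_apply, h1, sub_self, zero_sub]
    rw [show π (x1 i) - x1 i = -(a1 i) by simp [ha1def], map_neg, neg_neg]
  have h0u : Tendsto (fun i => projOp TY (‖a1 i‖⁻¹ • a1 i)) atTop (nhds 0) := by
    have h := tendsto_inv_smul_of_isLittleO hlo1'
    refine h.congr fun i => ?_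
    rw [show ‖π (x1 i) - x1 i‖ = ‖a1 i‖ from norm_sub_rev _ _, map_smul]
  have hfu : projOp TY u = 0 :=
    tendsto_nhds_unique (((projOp TY).continuous.tendsto u).comp hu) (h0u.comp hφt)
  have huTY : u ∈ TYᗮ := by
    apply Submodule.orthogonalProjectionOnto_eq_zero_iff.mp
    exact Submodule.coe_eq_zero.mp hfu
  -- v ∈ TY
  have hlo2 := hstrict.isLittleO.comp_tendsto (hπx1.prodMk_nhds hy1)
  have hlo2' : (fun i => b1 i - projOp TY (b1 i)) =o[atTop] b1 := by
    refine hlo2.congr' (Eventually.of_forall fun i => ?_)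
      (Eventually.of_forall fun i => ?_)
    · have h1 : π (π (x1 i)) = π (x1 i) := hπr _ (hπY _)
      have h2 : π (y1 i) = y1 i := hπr _ (hy'Y _)
      simp only [Function.comp_apply, h1, h2]
      rfl
    · rfl
  have h0v : Tendsto (fun i => ‖b1 i‖⁻¹ • b1 i - projOp TY (‖b1 i‖⁻¹ • b1 i)) atTop (nhds 0) := by
    have h := tendsto_inv_smul_of_isLittleO hlo2'
    refine h.congr fun i => ?_
    rw [smul_sub, map_smul]
  have hfv : v - projOp TY v = 0 :=
    tendsto_nhds_unique (hv.sub (((projOp TY).continuous.tendsto v).comp hv)) (h0v.comp hφt)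
  have hvTY : v ∈ TY := by
    apply Submodule.starProjection_eq_self_iff.mp
    have : projOp TY v = v := by linear_combination (norm := module) -hfv
    exact this
  have hvτ : v ∈ τ := hTYτ hvTY
  -- inner u v = 0
  have huv : ⟪u, v⟫ = 0 := by
    rw [real_inner_comm]
    exact (Submodule.mem_orthogonal TY u).mp huTY v hvTY
  -- ℓ = α • u + β • v
  have hdecomp : ∀ i, ‖s1 i‖⁻¹ • s1 i =
      (‖s1 i‖⁻¹ * ‖a1 i‖) • (‖a1 i‖⁻¹ • a1 i) + (‖s1 i‖⁻¹ * ‖b1 i‖) • (‖b1 i‖⁻¹ • b1 i) := by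
    intro i
    rw [mul_smul, mul_smul, norm_smul_inv_smul_self, norm_smul_inv_smul_self, ← smul_add]
    congr 1
    simp [ha1def, hb1def, hs1def]
  have hℓ2 : Tendsto (fun i => ‖s1 (φ i)‖⁻¹ • s1 (φ i)) atTop (nhds ℓ) :=
    (hℓ.comp hshift).comp hφt
  have hRHS : Tendsto (fun i =>
      (‖s1 (φ i)‖⁻¹ * ‖a1 (φ i)‖) • (‖a1 (φ i)‖⁻¹ • a1 (φ i)) +
      (‖s1 (φ i)‖⁻¹ * ‖b1 (φ i)‖) • (‖b1 (φ i)‖⁻¹ • b1 (φ i))) atTop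
      (nhds (α • u + β • v)) := (hα.smul hu).add (hβ.smul hv)
  have hℓeq : ℓ = α • u + β • v :=
    tendsto_nhds_unique ((tendsto_congr fun i => hdecomp (φ i)).mp hℓ2) hRHS
  -- α ≥ 0 and α * ‖u‖ ≤ 1
  have hα0 : (0:ℝ) ≤ α := ge_of_tendsto' hα fun i => by positivity
  have hsq : ‖ℓ‖ ^ 2 = ‖α • u‖ ^ 2 + ‖β • v‖ ^ 2 := by
    rw [hℓeq, norm_add_sq_real]
    have : ⟪α • u, β • v⟫ = 0 := by
      rw [real_inner_smul_left, real_inner_smul_right, huv]; ring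
    rw [this]; ring
  have hαu : α * ‖u‖ ≤ 1 := by
    have h2 : ‖α • u‖ = α * ‖u‖ := by rw [norm_smul, Real.norm_eq_abs, abs_of_nonneg hα0]
    rw [hℓ1, h2, one_pow] at hsq
    have h1 : (α * ‖u‖) ^ 2 ≤ 1 := by nlinarith [sq_nonneg ‖β • v‖]
    exact (pow_le_one_iff_of_nonneg (mul_nonneg hα0 (norm_nonneg u)) two_ne_zero).mp h1
  -- ‖u - P u‖ ≤ δ * ‖u‖
  have hPu : ‖u - projOp τ u‖ ≤ δ * ‖u‖ := by
    rcases eq_or_ne u 0 with rfl | hu0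
    · simp
    · have h := husin
      rw [sinAngle_eq, div_le_iff₀ (norm_pos_iff.mpr hu0)] at h
      linarith [h]
  -- conclude
  have hPv : projOp τ v = v := Submodule.starProjection_eq_self_iff.mpr hvτ
  have hPℓ : projOp τ ℓ = α • projOp τ u + β • v := by
    rw [hℓeq, ContinuousLinearMap.map_add, ContinuousLinearMap.map_smul,
      ContinuousLinearMap.map_smul, hPv]
  have hkey : ℓ - projOp τ ℓ = α • (u - projOp τ u) := by
    rw [hPℓ, hℓeq, smul_sub]
    abel
  rw [sinAngle_eq, hℓ1, div_one, hkey, norm_smul, Real.norm_eq_abs, abs_of_nonneg hα0]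
  calc α * ‖u - projOp τ u‖ ≤ α * (δ * ‖u‖) := mul_le_mul_of_nonneg_left hPu hα0
    _ = δ * (α * ‖u‖) := by ring
    _ ≤ δ * 1 := mul_le_mul_of_nonneg_left hαu hδ0
    _ = δ := mul_one δ
end
end

section
/- Let F(x,y,z,t) = x³ + t·x·y^α + y^β·z + z^{3α} with 3α = 2β + 1, and let γ(s) = (x(s),y(s),z(s),t(s)) be an analytic arc in F⁻¹(0) through 0 along which condition (b^π) fails. Then the valuations ν along γ satisfy ν(x) > ν(y) = ν(z) > ν(t), ν(x) + ν(t) = ν(z) + (β - α)·ν(y), and 2ν(x) = ν(t) + α·ν(y); hence with m = ν(y), ν(x) = (β+1)m/3 and ν(t) = m/3. -/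
open Filter Topology

section Helpers

private lemma bs_eq_zero_at_zero {h : ℂ → ℂ} (hc : ContinuousAt h 0)
    (hev : ∀ᶠ s in 𝓝[≠] (0:ℂ), h s = 0) : h 0 = 0 := by
  have h1 : Tendsto h (𝓝[≠] (0:ℂ)) (𝓝 (h 0)) := hc.continuousWithinAt.tendsto
  have h2 : Tendsto h (𝓝[≠] (0:ℂ)) (𝓝 0) :=
    Tendsto.congr' (by filter_upwards [hev] with s hs using hs.symm) tendsto_const_nhds
  exact tendsto_nhds_unique h1 h2

private lemma bs_coeff4 {k1 k2 k3 k4 μ : ℕ} {u1 u2 u3 u4 : ℂ → ℂ}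
    (hc1 : ContinuousAt u1 0) (hc2 : ContinuousAt u2 0)
    (hc3 : ContinuousAt u3 0) (hc4 : ContinuousAt u4 0)
    (h1 : μ ≤ k1) (h2 : μ ≤ k2) (h3 : μ ≤ k3) (h4 : μ ≤ k4)
    (hsum : ∀ᶠ s in 𝓝 (0:ℂ),
      s^k1 * u1 s + s^k2 * u2 s + s^k3 * u3 s + s^k4 * u4 s = 0) :
    (0:ℂ)^(k1-μ) * u1 0 + 0^(k2-μ) * u2 0 + 0^(k3-μ) * u3 0 + 0^(k4-μ) * u4 0 = 0 := by
  have e1 : μ + (k1 - μ) = k1 := by omega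
  have e2 : μ + (k2 - μ) = k2 := by omega
  have e3 : μ + (k3 - μ) = k3 := by omega
  have e4 : μ + (k4 - μ) = k4 := by omega
  set h : ℂ → ℂ := fun s =>
    s^(k1-μ) * u1 s + s^(k2-μ) * u2 s + s^(k3-μ) * u3 s + s^(k4-μ) * u4 s with hh
  have hc : ContinuousAt h 0 := by
    apply ContinuousAt.add; apply ContinuousAt.add; apply ContinuousAt.add
    all_goals exact ContinuousAt.mul (continuousAt_pow _ _) (by assumption)
  have hev : ∀ᶠ s in 𝓝[≠] (0:ℂ), h s = 0 := by
    filter_upwards [eventually_nhdsWithin_of_eventually_nhds hsum,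
      self_mem_nhdsWithin] with s hs hne
    have key : s^μ * h s = 0 := by
      have : s^μ * h s = s^(μ+(k1-μ)) * u1 s + s^(μ+(k2-μ)) * u2 s
          + s^(μ+(k3-μ)) * u3 s + s^(μ+(k4-μ)) * u4 s := by
        simp only [hh]; ring
      rw [this, e1, e2, e3, e4]; exact hs
    exact (mul_eq_zero.mp key).resolve_left (pow_ne_zero _ hne)
  exact bs_eq_zero_at_zero hc hev

private lemma bs_coeff2 {k1 k2 μ : ℕ} {u1 u2 : ℂ → ℂ}
    (hc1 : ContinuousAt u1 0) (hc2 : ContinuousAt u2 0)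
    (h1 : μ ≤ k1) (h2 : μ ≤ k2)
    (hsum : ∀ᶠ s in 𝓝 (0:ℂ), s^k1 * u1 s + s^k2 * u2 s = 0) :
    (0:ℂ)^(k1-μ) * u1 0 + 0^(k2-μ) * u2 0 = 0 := by
  have := bs_coeff4 (u3 := fun _ => 0) (u4 := fun _ => 0)
    hc1 hc2 continuousAt_const continuousAt_const h1 h2 (le_refl μ) (le_refl μ)
    (by filter_upwards [hsum] with s hs; simpa using hs)
  simpa using this

end Helpers

private lemma bs_order_unique {f : ℂ → ℂ} {k l : ℕ}
    (hk : HasVanishingOrder f k) (hl : HasVanishingOrder f l) : k = l := by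
  obtain ⟨u, hu, hu0, hfu⟩ := hk
  obtain ⟨v, hv, hv0, hfv⟩ := hl
  by_contra hne
  have hsum : ∀ᶠ s in 𝓝 (0:ℂ), s^k * u s + s^l * (-v) s = 0 := by
    filter_upwards [hfu, hfv] with s h1 h2
    simp only [Pi.neg_apply]; rw [← h1]; rw [h2] at h1 ⊢; ring
  rcases lt_or_gt_of_ne hne with h | h
  · have := bs_coeff2 hu.continuousAt hv.continuousAt.neg (le_refl k) (le_of_lt h) hsum
    rw [Nat.sub_self] at this
    simp [zero_pow (by omega : l - k ≠ 0)] at this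
    exact hu0 this
  · have := bs_coeff2 (μ := l) hu.continuousAt hv.continuousAt.neg (le_of_lt h) (le_refl l) hsum
    rw [Nat.sub_self] at this
    simp [zero_pow (by omega : k - l ≠ 0)] at this
    exact hv0 this

private lemma bs_pair {f g u v : ℂ → ℂ} {k l : ℕ}
    (hu : AnalyticAt ℂ u 0) (hv : AnalyticAt ℂ v 0)
    (hf : ∀ᶠ s in 𝓝 (0:ℂ), f s = s^k * u s) (hg : ∀ᶠ s in 𝓝 (0:ℂ), g s = s^l * v s)
    (hne : (0:ℂ)^(k - min k l) * u 0 + 0^(l - min k l) * v 0 ≠ 0) :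
    HasVanishingOrder (fun s => f s + g s) (min k l) := by
  refine ⟨fun s => s^(k - min k l) * u s + s^(l - min k l) * v s, ?_, hne, ?_⟩
  · exact (((analyticAt_id).pow _).mul hu).add (((analyticAt_id).pow _).mul hv)
  · have e1 : min k l + (k - min k l) = k := by omega
    have e2 : min k l + (l - min k l) = l := by omega
    filter_upwards [hf, hg] with s h1 h2
    rw [h1, h2, mul_add, ← mul_assoc, ← mul_assoc, ← pow_add, ← pow_add, e1, e2]

private lemma bs_pair' {f g u v : ℂ → ℂ} {k l μ : ℕ}
    (hu : AnalyticAt ℂ u 0) (hv : AnalyticAt ℂ v 0)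
    (hf : ∀ᶠ s in 𝓝 (0:ℂ), f s = s^k * u s) (hg : ∀ᶠ s in 𝓝 (0:ℂ), g s = s^l * v s)
    (hμ : μ = min k l)
    (hne : (0:ℂ)^(k - μ) * u 0 + 0^(l - μ) * v 0 ≠ 0) :
    HasVanishingOrder (fun s => f s + g s) μ := by
  subst hμ; exact bs_pair hu hv hf hg hne

set_option maxHeartbeats 1600000 in
/-- For `F(x,y,z,t) = x³ + txy^α + y^β z + z^{3α}` with `3α = 2β + 1`, let
`γ = (x,y,z,t)` be an analytic arc in `F⁻¹(0)` through `0` along which `(b^π)`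
fails, i.e. `ν(t) + ν(xy^α) ≤ min(ν(x),ν(y),ν(z)) + ν(J_X F∘γ)`.  Then
`ν(x) > ν(y) = ν(z) > ν(t)`, `ν(x) + ν(t) = ν(z) + (β-α)ν(y)` and
`2ν(x) = ν(t) + αν(y)`; hence with `m = ν(y)`, `3ν(x) = (β+1)m` and `3ν(t) = m`. -/
theorem briancon_speder_family_bpi_failure_valuations
    (α β : ℕ) (hα : 3 ≤ α) (hβ : 0 < β) (hrel : 3 * α = 2 * β + 1)
    (x y z t : ℂ → ℂ)
    (hxa : AnalyticAt ℂ x 0) (hya : AnalyticAt ℂ y 0)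
    (hza : AnalyticAt ℂ z 0) (hta : AnalyticAt ℂ t 0)
    (hFγ : ∀ᶠ s in nhds (0 : ℂ),
      (x s) ^ 3 + t s * x s * (y s) ^ α + (y s) ^ β * z s + (z s) ^ (3 * α) = 0)
    (νx νy νz νt νdt νdx νdy νdz : ℕ)
    (hνx : HasVanishingOrder x νx) (hνy : HasVanishingOrder y νy)
    (hνz : HasVanishingOrder z νz) (hνt : HasVanishingOrder t νt)
    (h1x : 1 ≤ νx) (h1y : 1 ≤ νy) (h1z : 1 ≤ νz) (h1t : 1 ≤ νt)
    (hνdt : HasVanishingOrder (fun s => x s * (y s) ^ α) νdt)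
    (hνdx : HasVanishingOrder (fun s => 3 * (x s) ^ 2 + t s * (y s) ^ α) νdx)
    (hνdy : HasVanishingOrder
      (fun s => (α : ℂ) * t s * x s * (y s) ^ (α - 1)
        + (β : ℂ) * (y s) ^ (β - 1) * z s) νdy)
    (hνdz : HasVanishingOrder
      (fun s => (y s) ^ β + (3 * α : ℂ) * (z s) ^ (3 * α - 1)) νdz)
    (hfail : νt + νdt ≤ min νx (min νy νz) + min νdx (min νdy νdz)) :
    νx > νy ∧ νy = νz ∧ νz > νt ∧
    νx + νt = νz + (β - α) * νy ∧ 2 * νx = νt + α * νy ∧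
    3 * νx = (β + 1) * νy ∧ 3 * νt = νy := by
  obtain ⟨δ, hδ1, rfl, rfl⟩ : ∃ δ, 1 ≤ δ ∧ α = 2*δ+1 ∧ β = 3*δ+1 :=
    ⟨(α-1)/2, by omega, by omega, by omega⟩
  simp only [show 3*(2*δ+1) = 6*δ+3 from by ring, show 2*δ+1-1 = 2*δ from by omega,
    show 3*δ+1-1 = 3*δ from by omega, show 6*δ+3-1 = 6*δ+2 from by omega]
    at hFγ hνdy hνdz ⊢
  obtain ⟨ux, hux, hux0, hxe⟩ := hνx
  obtain ⟨uy, huy, huy0, hye⟩ := hνy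
  obtain ⟨uz, huz, huz0, hze⟩ := hνz
  obtain ⟨ut, hut, hut0, hte⟩ := hνt
  -- arithmetic bridges
  have hδm : νy ≤ δ * νy := Nat.le_mul_of_pos_left _ hδ1
  have hδn : νz ≤ δ * νz := Nat.le_mul_of_pos_left _ hδ1
  have hbr1 : (2*δ+1)*νy = 2*(δ*νy) + νy := by ring
  have hbr2 : (3*δ+1)*νy = 3*(δ*νy) + νy := by ring
  have hbr3 : (6*δ+3)*νz = 6*(δ*νz) + 3*νz := by ring
  have hbr4 : 3*δ*νy = 3*(δ*νy) := by ring
  have hbr5 : 2*δ*νy = 2*(δ*νy) := by ring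
  have hbr6 : (6*δ+2)*νz = 6*(δ*νz) + 2*νz := by ring
  have hbr7 : (3*δ+1+1)*νy = 3*(δ*νy) + 2*νy := by ring
  have hbr8 : (3*δ+1-(2*δ+1))*νy = δ*νy := by
    rw [show 3*δ+1-(2*δ+1) = δ from by omega]
  -- split the failure hypothesis
  have hfx : νt + νdt ≤ min νx (min νy νz) + νdx := le_trans hfail (by omega)
  have hfy : νt + νdt ≤ min νx (min νy νz) + νdy := le_trans hfail (by omega)
  have hfz : νt + νdt ≤ min νx (min νy νz) + νdz := le_trans hfail (by omega)
  -- value of νdt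
  have hdt : νdt = νx + (2*δ+1)*νy := by
    refine bs_order_unique hνdt ⟨fun s => ux s * uy s^(2*δ+1), hux.mul (huy.pow _),
      mul_ne_zero hux0 (pow_ne_zero _ huy0), ?_⟩
    filter_upwards [hxe, hye] with s h1 h2
    rw [h1, h2]; ring
  -- the four monomials of F
  have hF4 : ∀ᶠ s in 𝓝 (0:ℂ),
      s^(3*νx) * (fun s => ux s^3) s
      + s^(νt+νx+(2*δ+1)*νy) * (fun s => ut s * ux s * uy s^(2*δ+1)) s
      + s^((3*δ+1)*νy+νz) * (fun s => uy s^(3*δ+1) * uz s) s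
      + s^((6*δ+3)*νz) * (fun s => uz s^(6*δ+3)) s = 0 := by
    filter_upwards [hFγ, hxe, hye, hze, hte] with s h0 h1 h2 h3 h4
    have e : x s^3 + t s * x s * y s^(2*δ+1) + y s^(3*δ+1) * z s + z s^(6*δ+3)
        = s^(3*νx) * (ux s^3)
          + s^(νt+νx+(2*δ+1)*νy) * (ut s * ux s * uy s^(2*δ+1))
          + s^((3*δ+1)*νy+νz) * (uy s^(3*δ+1) * uz s)
          + s^((6*δ+3)*νz) * (uz s^(6*δ+3)) := by
      rw [h1, h2, h3, h4]; ring
    show s^(3*νx) * (ux s^3)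
      + s^(νt+νx+(2*δ+1)*νy) * (ut s * ux s * uy s^(2*δ+1))
      + s^((3*δ+1)*νy+νz) * (uy s^(3*δ+1) * uz s)
      + s^((6*δ+3)*νz) * (uz s^(6*δ+3)) = 0
    rw [← e]; exact h0
  -- monomial representations for the partials
  have h3xe : ∀ᶠ s in 𝓝 (0:ℂ), 3 * x s^2 = s^(2*νx) * (3 * ux s^2) := by
    filter_upwards [hxe] with s h1; rw [h1]; ring
  have htye : ∀ᶠ s in 𝓝 (0:ℂ),
      t s * y s^(2*δ+1) = s^(νt+(2*δ+1)*νy) * (ut s * uy s^(2*δ+1)) := by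
    filter_upwards [hte, hye] with s h1 h2; rw [h1, h2]; ring
  -- Step 1 : 2νx = νt + ανy
  have E1 : 2*νx = νt + (2*δ+1)*νy := by
    by_contra hne
    have hne' : 2*νx ≠ νt + (2*δ+1)*νy := hne
    have hdx : νdx = min (2*νx) (νt+(2*δ+1)*νy) := by
      refine bs_order_unique hνdx
        (bs_pair ((analyticAt_const).mul (hux.pow 2)) (hut.mul (huy.pow _)) h3xe htye ?_)
      rcases lt_or_gt_of_ne hne' with hlt | hgt
      · rw [min_eq_left hlt.le, Nat.sub_self,
          zero_pow (show νt+(2*δ+1)*νy - 2*νx ≠ 0 by omega)]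
        simp only [pow_zero, one_mul, zero_mul, add_zero]
        exact mul_ne_zero (by norm_num) (pow_ne_zero _ hux0)
      · rw [min_eq_right hgt.le, Nat.sub_self,
          zero_pow (show 2*νx - (νt+(2*δ+1)*νy) ≠ 0 by omega)]
        simp only [pow_zero, one_mul, zero_mul, zero_add]
        exact mul_ne_zero hut0 (pow_ne_zero _ huy0)
    have hxle : νx ≤ νy ∧ νx ≤ νz := by omega
    have hco := bs_coeff4 (μ := 3*νx)
      (hux.continuousAt.pow 3)
      ((hut.continuousAt.mul hux.continuousAt).mul (huy.continuousAt.pow _))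
      ((huy.continuousAt.pow _).mul huz.continuousAt)
      (huz.continuousAt.pow _)
      (le_refl _) (by omega) (by omega) (by omega) hF4
    rw [Nat.sub_self, zero_pow (show νt+νx+(2*δ+1)*νy - 3*νx ≠ 0 by omega),
      zero_pow (show (3*δ+1)*νy+νz - 3*νx ≠ 0 by omega),
      zero_pow (show (6*δ+3)*νz - 3*νx ≠ 0 by omega)] at hco
    simp only [pow_zero, one_mul, zero_mul, add_zero] at hco
    exact hux0 (by simpa [pow_eq_zero_iff] using hco)
  have ham : νy < νx := by omega
  -- if the leading coefficient of ∂F/∂x is nonzero we get a contradiction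
  have hCxcontra : 3*(ux 0)^2 + ut 0 * uy 0^(2*δ+1) ≠ 0 → False := by
    intro hCx
    have hdx : νdx = 2*νx := by
      refine bs_order_unique hνdx
        (bs_pair' ((analyticAt_const).mul (hux.pow 2)) (hut.mul (huy.pow _)) h3xe htye
          (by omega) ?_)
      rw [Nat.sub_self, show νt+(2*δ+1)*νy - 2*νx = 0 from by omega]
      simpa only [pow_zero, one_mul, Pi.mul_apply, Pi.pow_apply] using hCx
    omega
  -- unique-minimum contradictions in F∘γ = 0
  have zmin : ¬ ((6*δ+3)*νz < 3*νx ∧ (6*δ+3)*νz < νt+νx+(2*δ+1)*νy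
      ∧ (6*δ+3)*νz < (3*δ+1)*νy+νz) := by
    rintro ⟨c1, c2, c3⟩
    have hco := bs_coeff4 (μ := (6*δ+3)*νz)
      (hux.continuousAt.pow 3)
      ((hut.continuousAt.mul hux.continuousAt).mul (huy.continuousAt.pow _))
      ((huy.continuousAt.pow _).mul huz.continuousAt)
      (huz.continuousAt.pow _)
      (by omega) (by omega) (by omega) (le_refl _) hF4
    rw [Nat.sub_self, zero_pow (show 3*νx - (6*δ+3)*νz ≠ 0 by omega),
      zero_pow (show νt+νx+(2*δ+1)*νy - (6*δ+3)*νz ≠ 0 by omega),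
      zero_pow (show (3*δ+1)*νy+νz - (6*δ+3)*νz ≠ 0 by omega)] at hco
    simp only [pow_zero, one_mul, zero_mul, zero_add, add_zero] at hco
    exact huz0 (by simpa [pow_eq_zero_iff] using hco)
  have ymin : ¬ ((3*δ+1)*νy+νz < 3*νx ∧ (3*δ+1)*νy+νz < νt+νx+(2*δ+1)*νy
      ∧ (3*δ+1)*νy+νz < (6*δ+3)*νz) := by
    rintro ⟨c1, c2, c3⟩
    have hco := bs_coeff4 (μ := (3*δ+1)*νy+νz)
      (hux.continuousAt.pow 3)
      ((hut.continuousAt.mul hux.continuousAt).mul (huy.continuousAt.pow _))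
      ((huy.continuousAt.pow _).mul huz.continuousAt)
      (huz.continuousAt.pow _)
      (by omega) (by omega) (le_refl _) (by omega) hF4
    rw [Nat.sub_self, zero_pow (show 3*νx - ((3*δ+1)*νy+νz) ≠ 0 by omega),
      zero_pow (show νt+νx+(2*δ+1)*νy - ((3*δ+1)*νy+νz) ≠ 0 by omega),
      zero_pow (show (6*δ+3)*νz - ((3*δ+1)*νy+νz) ≠ 0 by omega)] at hco
    simp only [pow_zero, one_mul, zero_mul, zero_add, add_zero] at hco
    exact mul_ne_zero (pow_ne_zero _ huy0) huz0 hco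
  rcases lt_trichotomy ((3*δ+1)*νy+νz) (3*νx) with hA | hB | hC
  · -- Case A : βνy + νz < 3νx ; always contradictory
    exfalso
    rcases lt_trichotomy ((6*δ+3)*νz) ((3*δ+1)*νy+νz) with hA1 | hA2 | hA3
    · exact zmin ⟨by omega, by omega, hA1⟩
    · -- equal orders of the two minimal monomials; cancellation forced
      have hco := bs_coeff4 (μ := (3*δ+1)*νy+νz)
        (hux.continuousAt.pow 3)
        ((hut.continuousAt.mul hux.continuousAt).mul (huy.continuousAt.pow _))
        ((huy.continuousAt.pow _).mul huz.continuousAt)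
        (huz.continuousAt.pow _)
        (by omega) (by omega) (le_refl _) (by omega) hF4
      rw [Nat.sub_self, show (6*δ+3)*νz - ((3*δ+1)*νy+νz) = 0 from by omega,
        zero_pow (show 3*νx - ((3*δ+1)*νy+νz) ≠ 0 by omega),
        zero_pow (show νt+νx+(2*δ+1)*νy - ((3*δ+1)*νy+νz) ≠ 0 by omega)] at hco
      simp only [pow_zero, one_mul, zero_mul, zero_add, add_zero] at hco
      -- hco : uy 0 ^ (3δ+1) * uz 0 + uz 0 ^ (6δ+3) = 0
      have hYZ : uy 0^(3*δ+1) + uz 0^(6*δ+2) = 0 := by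
        have h2 : (uy 0^(3*δ+1) + uz 0^(6*δ+2)) * uz 0 = 0 := by
          linear_combination (norm := (simp only [Pi.mul_apply, Pi.pow_apply]; ring1)) hco
        exact (mul_eq_zero.mp h2).resolve_right huz0
      have hybe : ∀ᶠ s in 𝓝 (0:ℂ), y s^(3*δ+1) = s^((3*δ+1)*νy) * (uy s^(3*δ+1)) := by
        filter_upwards [hye] with s h1; rw [h1]; ring
      have hzbe : ∀ᶠ s in 𝓝 (0:ℂ), 3*((2*δ+1:ℕ):ℂ)*z s^(6*δ+2)
          = s^((6*δ+2)*νz) * (3*((2*δ+1:ℕ):ℂ)*uz s^(6*δ+2)) := by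
        filter_upwards [hze] with s h1; rw [h1]; ring
      have hdz : νdz = (3*δ+1)*νy := by
        refine bs_order_unique hνdz
          (bs_pair' (huy.pow _) ((analyticAt_const).mul (huz.pow _))
            hybe hzbe (by omega) ?_)
        rw [Nat.sub_self, show (6*δ+2)*νz - (3*δ+1)*νy = 0 from by omega]
        simp only [pow_zero, one_mul]
        intro hzero
        have h3 : ((3*((2*δ+1:ℕ):ℂ)) - 1) * uz 0^(6*δ+2) = 0 := by
          linear_combination (norm := (simp only [Pi.mul_apply, Pi.pow_apply]; ring1)) hzero - hYZ
        have h4 : ((3*((2*δ+1:ℕ):ℂ)) - 1) ≠ 0 := by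
          have : ((3*((2*δ+1:ℕ):ℂ)) - 1) = ((6*δ+2 : ℕ) : ℂ) := by push_cast; ring
          rw [this]
          have h6 : (6*δ+2 : ℕ) ≠ 0 := by omega
          exact Nat.cast_ne_zero.mpr h6
        exact pow_ne_zero _ huz0 ((mul_eq_zero.mp h3).resolve_left h4)
      omega
    · exact ymin ⟨hA, by omega, hA3⟩
  · -- Case B : βνy + νz = 3νx
    rcases lt_trichotomy ((6*δ+3)*νz) (3*νx) with hB1 | hB2 | hB3
    · exact (zmin ⟨hB1, by omega, by omega⟩).elim
    · -- both equal to 3νx : arithmetically impossible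
      exfalso
      rcases lt_trichotomy νy (2*νz) with c1 | c2 | c3
      · have hc : δ*νy + δ ≤ 2*(δ*νz) := by
          calc δ*νy + δ = δ*(νy+1) := by ring
            _ ≤ δ*(2*νz) := Nat.mul_le_mul_left _ (by omega)
            _ = 2*(δ*νz) := by ring
        omega
      · have hc : δ*νy = 2*(δ*νz) := by rw [c2]; ring
        omega
      · have hc : 2*(δ*νz) + δ ≤ δ*νy := by
          calc 2*(δ*νz) + δ = δ*(2*νz+1) := by ring
            _ ≤ δ*νy := Nat.mul_le_mul_left _ (by omega)
        omega
    · -- MAIN CASE : βνy + νz = 3νx < 3ανz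
      -- leading coefficient relation from F∘γ = 0
      have hco := bs_coeff4 (μ := 3*νx)
        (hux.continuousAt.pow 3)
        ((hut.continuousAt.mul hux.continuousAt).mul (huy.continuousAt.pow _))
        ((huy.continuousAt.pow _).mul huz.continuousAt)
        (huz.continuousAt.pow _)
        (le_refl _) (by omega) (by omega) (by omega) hF4
      rw [Nat.sub_self, show νt+νx+(2*δ+1)*νy - 3*νx = 0 from by omega,
        show (3*δ+1)*νy+νz - 3*νx = 0 from by omega,
        zero_pow (show (6*δ+3)*νz - 3*νx ≠ 0 by omega)] at hco
      simp only [pow_zero, one_mul, zero_mul, add_zero] at hco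
      -- hco : ux0³ + ut0·ux0·uy0^{2δ+1} + uy0^{3δ+1}·uz0 = 0
      -- the order of ∂F/∂z is βνy, whence νz ≤ νy
      have hybe : ∀ᶠ s in 𝓝 (0:ℂ), y s^(3*δ+1) = s^((3*δ+1)*νy) * (uy s^(3*δ+1)) := by
        filter_upwards [hye] with s h1; rw [h1]; ring
      have hzbe : ∀ᶠ s in 𝓝 (0:ℂ), 3*((2*δ+1:ℕ):ℂ)*z s^(6*δ+2)
          = s^((6*δ+2)*νz) * (3*((2*δ+1:ℕ):ℂ)*uz s^(6*δ+2)) := by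
        filter_upwards [hze] with s h1; rw [h1]; ring
      have hdz : νdz = (3*δ+1)*νy := by
        refine bs_order_unique hνdz
          (bs_pair' (huy.pow _) ((analyticAt_const).mul (huz.pow _))
            hybe hzbe (by omega) ?_)
        rw [Nat.sub_self, zero_pow (show (6*δ+2)*νz - (3*δ+1)*νy ≠ 0 by omega)]
        simp only [pow_zero, one_mul, zero_mul, add_zero]
        exact pow_ne_zero _ huy0
      have hnm : νz ≤ νy := by omega
      -- the leading coefficient of ∂F/∂x must vanish
      have hCx0 : 3*(ux 0)^2 + ut 0 * uy 0^(2*δ+1) = 0 := by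
        by_contra h; exact hCxcontra h
      -- hence the leading coefficient of ∂F/∂y does not vanish
      have hCy : ((2*δ+1:ℕ):ℂ)*ut 0*ux 0*uy 0^(2*δ)
          + ((3*δ+1:ℕ):ℂ)*uy 0^(3*δ)*uz 0 ≠ 0 := by
        intro h
        have hx3 : (ux 0)^3 = 0 := by
          linear_combination (norm := (push_cast [Pi.mul_apply, Pi.pow_apply]; ring1))
            (-(uy 0)) * h - ((δ:ℕ):ℂ)*(ux 0)*hCx0 + ((3*δ+1:ℕ):ℂ)*hco
        exact pow_ne_zero 3 hux0 hx3
      -- so νdy = νt + νx + (α-1)νy, whence νy ≤ νz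
      have haty : ∀ᶠ s in 𝓝 (0:ℂ), ((2*δ+1:ℕ):ℂ)*t s*x s*y s^(2*δ)
          = s^(νt+νx+2*δ*νy) * (((2*δ+1:ℕ):ℂ)*ut s*ux s*uy s^(2*δ)) := by
        filter_upwards [hte, hxe, hye] with s h1 h2 h3; rw [h1, h2, h3]; ring
      have hbyz : ∀ᶠ s in 𝓝 (0:ℂ), ((3*δ+1:ℕ):ℂ)*y s^(3*δ)*z s
          = s^(3*δ*νy+νz) * (((3*δ+1:ℕ):ℂ)*uy s^(3*δ)*uz s) := by
        filter_upwards [hye, hze] with s h1 h2; rw [h1, h2]; ring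
      have hdy : νdy = νt+νx+2*δ*νy := by
        refine bs_order_unique hνdy
          (bs_pair' (((analyticAt_const.mul hut).mul hux).mul (huy.pow _))
            ((analyticAt_const.mul (huy.pow _)).mul huz)
            haty hbyz (by omega) ?_)
        rw [Nat.sub_self, show 3*δ*νy+νz - (νt+νx+2*δ*νy) = 0 from by omega]
        simp only [pow_zero, one_mul]
        exact hCy
      have hmn : νy ≤ νz := by omega
      refine ⟨?_, ?_, ?_, ?_, ?_, ?_, ?_⟩ <;> omega
  · -- Case C : βνy + νz > 3νx ; always contradictory
    exfalso
    rcases lt_trichotomy ((6*δ+3)*νz) (3*νx) with hC1 | hC2 | hC3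
    · exact zmin ⟨hC1, by omega, by omega⟩
    · rcases le_or_gt (2*νz) νy with c1 | c2
      · have hc : 2*(δ*νz) ≤ δ*νy := by
          calc 2*(δ*νz) = δ*(2*νz) := by ring
            _ ≤ δ*νy := Nat.mul_le_mul_left _ c1
        omega
      · have hc : δ*νy + δ ≤ 2*(δ*νz) := by
          calc δ*νy + δ = δ*(νy+1) := by ring
            _ ≤ δ*(2*νz) := Nat.mul_le_mul_left _ (by omega)
            _ = 2*(δ*νz) := by ring
        omega
    · -- both y^β z and z^{3α} have order > 3νx : forced cancellation in x³ + txy^α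
      have hco := bs_coeff4 (μ := 3*νx)
        (hux.continuousAt.pow 3)
        ((hut.continuousAt.mul hux.continuousAt).mul (huy.continuousAt.pow _))
        ((huy.continuousAt.pow _).mul huz.continuousAt)
        (huz.continuousAt.pow _)
        (le_refl _) (by omega) (by omega) (by omega) hF4
      rw [Nat.sub_self, show νt+νx+(2*δ+1)*νy - 3*νx = 0 from by omega,
        zero_pow (show (3*δ+1)*νy+νz - 3*νx ≠ 0 by omega),
        zero_pow (show (6*δ+3)*νz - 3*νx ≠ 0 by omega)] at hco
      simp only [pow_zero, one_mul, zero_mul, add_zero] at hco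
      -- hco : ux0³ + ut0 ux0 uy0^{2δ+1} = 0
      apply hCxcontra
      intro hzero
      have h2 : (2:ℂ) * ux 0^3 = 0 := by
        linear_combination (norm := (simp only [Pi.mul_apply, Pi.pow_apply]; ring1)) (ux 0) * hzero - hco
      have := (mul_eq_zero.mp h2).resolve_left (by norm_num)
      exact hux0 (by simpa [pow_eq_zero_iff] using this)
end
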